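/- arXiv:1710.09112 — 6 statements merged into one kernel-verified Lean document; each statement's English description precedes it below -/
import Mathlib

section
/- Let P be a polynomial in r variables over the real numbers with positive coefficients and total degree κ. Then for every real s with s < r/κ, the series ∑_{x_1,...,x_r=1}^∞ P(x_1,...,x_r)^{-s} diverges. -/
open MvPolynomial

/-- Let `P` be a nonzero polynomial in `r` variables over ℝ with positive coefficients and
total degree `κ`. Then for every real `s < r/κ`, the series
`∑_{x₁,…,x_r = 1}^∞ P(x₁,…,x_r)^{-s}` diverges. -/
theorem mellin_series_diverges_of_lt {r κ : ℕ} (hr : 0 < r)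
    (P : MvPolynomial (Fin r) ℝ) (hP : P ≠ 0)
    (hpos : ∀ m ∈ P.support, 0 < P.coeff m)
    (hκ : P.totalDegree = κ)
    (s : ℝ) (hs : s < (r : ℝ) / (κ : ℝ)) :
    ¬ Summable (fun x : Fin r → ℕ+ =>
      (MvPolynomial.eval (fun i => ((x i : ℕ) : ℝ)) P) ^ (-s)) := by
  intro hsum
  haveI : Nonempty (Fin r) := ⟨⟨0, hr⟩⟩
  have hsupp : P.support.Nonempty := support_nonempty.mpr hP
  -- positivity of eval at positive points
  have heval_pos : ∀ f : Fin r → ℝ, (∀ i, 0 < f i) → 0 < eval f P := by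
    intro f hf
    rw [eval_eq]
    refine Finset.sum_pos (fun m hm => ?_) hsupp
    exact mul_pos (hpos m hm) (Finset.prod_pos fun i _ => pow_pos (hf i) _)
  -- monotonicity
  have heval_mono : ∀ f g : Fin r → ℝ, (∀ i, 0 ≤ f i) → (∀ i, f i ≤ g i) →
      eval f P ≤ eval g P := by
    intro f g hf hfg
    rw [eval_eq, eval_eq]
    refine Finset.sum_le_sum fun m hm => ?_
    refine mul_le_mul_of_nonneg_left ?_ (hpos m hm).le
    exact Finset.prod_le_prod (fun i _ => pow_nonneg (hf i) _)
      (fun i _ => pow_le_pow_left₀ (hf i) (hfg i) _)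
  have hterm_pos : ∀ x : Fin r → ℕ+, 0 < eval (fun i => ((x i : ℕ) : ℝ)) P := by
    intro x
    exact heval_pos _ fun i => by exact_mod_cast (x i).pos
  have hterm_ge : ∀ x : Fin r → ℕ+, eval (fun _ => (1 : ℝ)) P ≤
      eval (fun i => ((x i : ℕ) : ℝ)) P := by
    intro x
    refine heval_mono _ _ (fun i => zero_le_one) fun i => ?_
    exact_mod_cast (x i).one_le
  rcases le_or_gt s 0 with hs0 | hs0
  · -- s ≤ 0 : terms are bounded below by a positive constant
    set c := eval (fun _ => (1 : ℝ)) P with hc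
    have hcpos : 0 < c := heval_pos _ fun _ => one_pos
    have hlb : ∀ x : Fin r → ℕ+, c ^ (-s) ≤
        eval (fun i => ((x i : ℕ) : ℝ)) P ^ (-s) := by
      intro x
      exact Real.rpow_le_rpow hcpos.le (hterm_ge x) (by linarith)
    have h0 := hsum.tendsto_cofinite_zero
    have hev : ∀ᶠ x : (Fin r → ℕ+) in Filter.cofinite,
        (eval (fun i => ((x i : ℕ) : ℝ)) P) ^ (-s) < c ^ (-s) :=
      h0.eventually_lt_const (Real.rpow_pos_of_pos hcpos _)
    obtain ⟨x, hx⟩ := hev.exists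
    exact absurd (hlb x) (not_le.mpr hx)
  · -- 0 < s < r/κ, so κ > 0
    have hκpos : 0 < κ := by
      rcases Nat.eq_zero_or_pos κ with h | h
      · subst h; simp at hs; linarith
      · exact h
    have hrs : 0 < (r : ℝ) - κ * s := by
      have hκR : (0:ℝ) < κ := by exact_mod_cast hκpos
      rw [lt_div_iff₀ hκR] at hs
      nlinarith
    set C := ∑ m ∈ P.support, P.coeff m with hCdef
    have hCpos : 0 < C := Finset.sum_pos (fun m hm => hpos m hm) hsupp
    -- upper bound for eval at constant n
    have hQbound : ∀ n : ℕ+, eval (fun _ => ((n : ℕ) : ℝ)) P ≤ C * (n : ℝ) ^ κ := by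
      intro n
      have hn1 : (1:ℝ) ≤ (n : ℕ) := by exact_mod_cast n.one_le
      rw [eval_eq, hCdef, Finset.sum_mul]
      refine Finset.sum_le_sum fun m hm => ?_
      refine mul_le_mul_of_nonneg_left ?_ (hpos m hm).le
      rw [Finset.prod_pow_eq_pow_sum]
      refine pow_le_pow_right₀ hn1 ?_
      rw [← hκ]
      exact le_totalDegree hm
    have hfnonneg : ∀ x : Fin r → ℕ+,
        0 ≤ (eval (fun i => ((x i : ℕ) : ℝ)) P) ^ (-s) :=
      fun x => (Real.rpow_pos_of_pos (hterm_pos x) _).le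
    set T := ∑' x : Fin r → ℕ+, (eval (fun i => ((x i : ℕ) : ℝ)) P) ^ (-s) with hT
    -- key bound for each n
    have key : ∀ n : ℕ+, C ^ (-s) * ((n : ℕ) : ℝ) ^ ((r : ℝ) - κ * s) ≤ T := by
      intro n
      set box : Finset (Fin r → ℕ+) := Fintype.piFinset fun _ => Finset.Icc 1 n with hbox
      have hcard : box.card = (n : ℕ) ^ r := by
        rw [hbox, Fintype.card_piFinset]
        simp [PNat.card_Icc]
      have hnpos : (0:ℝ) < (n : ℕ) := by exact_mod_cast n.pos
      have hbase_pos : 0 < C * (n:ℝ) ^ κ := mul_pos hCpos (pow_pos hnpos κ)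
      have hb : ∀ x ∈ box, (C * (n:ℝ) ^ κ) ^ (-s) ≤
          (eval (fun i => ((x i : ℕ) : ℝ)) P) ^ (-s) := by
        intro x hx
        refine Real.rpow_le_rpow_of_nonpos (hterm_pos x) ?_ (by linarith)
        refine le_trans (heval_mono _ _ (fun i => by positivity) fun i => ?_) (hQbound n)
        have : x i ≤ n := by
          have := Fintype.mem_piFinset.mp hx i
          exact (Finset.mem_Icc.mp this).2
        exact_mod_cast this
      have h1 : (box.card : ℝ) * (C * (n:ℝ) ^ κ) ^ (-s) ≤
          ∑ x ∈ box, (eval (fun i => ((x i : ℕ) : ℝ)) P) ^ (-s) := by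
        have := Finset.card_nsmul_le_sum box _ _ hb
        rwa [nsmul_eq_mul] at this
      have h2 : ∑ x ∈ box, (eval (fun i => ((x i : ℕ) : ℝ)) P) ^ (-s) ≤ T :=
        Summable.sum_le_tsum box (fun x _ => hfnonneg x) hsum
      refine le_trans (le_of_eq ?_) (h1.trans h2)
      rw [hcard]
      rw [Real.mul_rpow hCpos.le (pow_pos hnpos κ).le]
      push_cast
      rw [← Real.rpow_natCast ((n:ℕ):ℝ) κ, ← Real.rpow_mul hnpos.le,
        ← Real.rpow_natCast ((n:ℕ):ℝ) r, ← mul_assoc,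
        mul_comm (((n:ℕ):ℝ) ^ (r:ℝ)) (C ^ (-s)), mul_assoc, ← Real.rpow_add hnpos]
      ring_nf
    -- derive contradiction: LHS tends to infinity
    have htend : Filter.Tendsto (fun N : ℕ => C ^ (-s) * (N : ℝ) ^ ((r:ℝ) - κ * s))
        Filter.atTop Filter.atTop := by
      refine Filter.Tendsto.const_mul_atTop (Real.rpow_pos_of_pos hCpos _) ?_
      exact (tendsto_rpow_atTop hrs).comp tendsto_natCast_atTop_atTop
    obtain ⟨N, hN1, hN2⟩ :=
      ((htend.eventually_gt_atTop T).and (Filter.eventually_ge_atTop 1)).exists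
    have hkey := key ⟨N, hN2⟩
    simp only [PNat.mk_coe] at hkey
    exact absurd hkey (not_le.mpr hN1)
end

section
/- Let f(x_1,...,x_r) be a polynomial with non-negative real coefficients and let s be a positive real number. If the integral ∫_{[1,∞)^r} f(x̄)^{-s} dx̄ is finite, then the multivariate series ∑_{x̄∈ℕ^r, x_i≥1} f(x̄)^{-s} converges; moreover every partial sum ∑_{x̄=1}^N f(x̄)^{-s} is bounded by (2^{κrs}+1)·∫_{[1,∞)^r} f(x̄)^{-s} dx̄, where κ is the total degree of f. -/
/-!
On the unit cube `n + [0,1)^r` with `n ∈ ℕ^r`, `n ≥ 1`, every point `x` satisfies `n ≤ x ≤ 2n`.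
Since `f` has non-negative coefficients it is monotone on the positive orthant and
`f(2n) ≤ 2^κ f(n)`, so `f(n)^{-s} ≤ 2^{κs} ∫_{n + [0,1)^r} f^{-s}`. The cubes are disjoint and lie
in `[1,∞)^r`, so summing gives `∑_{n ∈ T} f(n)^{-s} ≤ 2^{κs} ∫_{[1,∞)^r} f^{-s}` for every finite
`T`; both claims follow, as `2^{κs} ≤ 2^{κrs} + 1`.
-/

open MvPolynomial MeasureTheory Set Function

namespace MvPolynomial

variable {σ R : Type*} [CommSemiring R] [PartialOrder R] [IsOrderedRing R]
  {f : MvPolynomial σ R}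

theorem eval_nonneg_of_coeff_nonneg (hf : ∀ m, 0 ≤ f.coeff m) {x : σ → R} (hx : 0 ≤ x) :
    0 ≤ eval x f := by
  rw [eval_eq]
  exact Finset.sum_nonneg fun d _ => mul_nonneg (hf d)
    (Finset.prod_nonneg fun i _ => pow_nonneg (hx i) _)

theorem eval_le_eval_of_coeff_nonneg (hf : ∀ m, 0 ≤ f.coeff m) {x y : σ → R} (hx : 0 ≤ x)
    (hxy : x ≤ y) : eval x f ≤ eval y f := by
  rw [eval_eq, eval_eq]
  refine Finset.sum_le_sum fun d _ => mul_le_mul_of_nonneg_left ?_ (hf d)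
  exact Finset.prod_le_prod (fun i _ => pow_nonneg (hx i) _)
    fun i _ => pow_le_pow_left₀ (hx i) (hxy i) _

theorem eval_smul_le_of_coeff_nonneg (hf : ∀ m, 0 ≤ f.coeff m) {x : σ → R} (hx : 0 ≤ x)
    {c : R} (hc : 1 ≤ c) : eval (c • x) f ≤ c ^ f.totalDegree * eval x f := by
  rw [eval_eq, eval_eq, Finset.mul_sum]
  refine Finset.sum_le_sum fun d hd => ?_
  have hmonomial : ∏ i ∈ d.support, (c • x) i ^ d i
      = c ^ d.degree * ∏ i ∈ d.support, x i ^ d i := by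
    simp only [Pi.smul_apply, smul_eq_mul, mul_pow, Finset.prod_mul_distrib,
      Finset.prod_pow_eq_pow_sum, Finsupp.degree_apply]
  have hdeg : c ^ d.degree ≤ c ^ f.totalDegree :=
    pow_le_pow_right₀ hc (le_totalDegree hd)
  rw [hmonomial, mul_left_comm]
  exact mul_le_mul_of_nonneg_right hdeg
    (mul_nonneg (hf d) (Finset.prod_nonneg fun i _ => pow_nonneg (hx i) _))

end MvPolynomial

section UnitCube

variable {ι : Type*}

def unitCube (n : ι → ℕ) : Set (ι → ℝ) :=
  univ.pi fun i => Ico (n i : ℝ) (n i + 1)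

theorem pairwise_disjoint_unitCube : Pairwise (Disjoint on @unitCube ι) := by
  intro a b hab
  obtain ⟨i, hi⟩ := ne_iff.mp hab
  refine Set.disjoint_left.mpr fun x hxa hxb => hi ?_
  have ha := hxa i (mem_univ i)
  have hb := hxb i (mem_univ i)
  have hab : (a i : ℝ) < b i + 1 := ha.1.trans_lt hb.2
  have hba : (b i : ℝ) < a i + 1 := hb.1.trans_lt ha.2
  norm_cast at hab hba
  omega

theorem unitCube_subset_Icc {n : ι → ℕ} (hn : ∀ i, 1 ≤ n i) :
    unitCube n ⊆ Icc (fun i => (n i : ℝ)) ((2 : ℝ) • fun i => (n i : ℝ)) := by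
  intro x hx
  refine ⟨fun i => (hx i (mem_univ i)).1, fun i => ?_⟩
  have hni : (1 : ℝ) ≤ n i := by exact_mod_cast hn i
  simp only [Pi.smul_apply, smul_eq_mul]
  linarith [(hx i (mem_univ i)).2]

theorem unitCube_subset_pi_Ici_one {n : ι → ℕ} (hn : ∀ i, 1 ≤ n i) :
    unitCube n ⊆ univ.pi fun _ => Ici (1 : ℝ) :=
  fun x hx i _ => le_trans (by exact_mod_cast hn i) (hx i (mem_univ i)).1

variable [Fintype ι]

theorem measurableSet_unitCube (n : ι → ℕ) : MeasurableSet (unitCube n) :=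
  MeasurableSet.univ_pi fun _ => measurableSet_Ico

@[simp]
theorem volume_unitCube (n : ι → ℕ) : volume (unitCube n) = 1 := by
  simp [unitCube, volume_pi_pi]

end UnitCube

theorem sum_setIntegral_le_setIntegral {α ι : Type*} [MeasurableSpace α] {μ : Measure α}
    {g : α → ℝ} {S : Set α} {A : ι → Set α} (T : Finset ι) (hA : ∀ i ∈ T, MeasurableSet (A i))
    (hdisj : Set.PairwiseDisjoint ↑T A) (hAS : ∀ i ∈ T, A i ⊆ S) (hg : IntegrableOn g S μ)
    (hg0 : 0 ≤ᵐ[μ.restrict S] g) :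
    ∑ i ∈ T, ∫ x in A i, g x ∂μ ≤ ∫ x in S, g x ∂μ := by
  rw [← integral_biUnion_finset T hA hdisj fun i hi => hg.mono_set (hAS i hi)]
  exact setIntegral_mono_set hg hg0 (Set.iUnion₂_subset hAS).eventuallyLE

namespace MvPolynomial

variable {ι : Type*} [Fintype ι] {f : MvPolynomial ι ℝ} {s : ℝ}

theorem rpow_neg_eval_le_mul_setIntegral_unitCube (hf : ∀ m, 0 ≤ f.coeff m) (hs : 0 < s)
    {n : ι → ℕ} (hn : ∀ i, 1 ≤ n i)
    (hint : IntegrableOn (fun x => eval x f ^ (-s)) (unitCube n)) :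
    eval (fun i => (n i : ℝ)) f ^ (-s) ≤
      2 ^ (f.totalDegree * s) * ∫ x in unitCube n, eval x f ^ (-s) := by
  set A := eval (fun i => (n i : ℝ)) f
  have hn0 : 0 ≤ fun i => (n i : ℝ) := fun i => Nat.cast_nonneg _
  have hcube := unitCube_subset_Icc hn
  have hA_le : ∀ x ∈ unitCube n, A ≤ eval x f := fun x hx =>
    eval_le_eval_of_coeff_nonneg hf hn0 (hcube hx).1
  have hle_A : ∀ x ∈ unitCube n, eval x f ≤ 2 ^ f.totalDegree * A := fun x hx =>
    (eval_le_eval_of_coeff_nonneg hf (hn0.trans (hcube hx).1) (hcube hx).2).trans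
      (eval_smul_le_of_coeff_nonneg hf hn0 one_le_two)
  have hA0 : 0 ≤ A := eval_nonneg_of_coeff_nonneg hf hn0
  rcases hA0.eq_or_lt with hA | hA
  · rw [← hA, Real.zero_rpow (neg_ne_zero.2 hs.ne')]
    exact mul_nonneg (by positivity) (setIntegral_nonneg (measurableSet_unitCube n)
      fun x hx => Real.rpow_nonneg (hA.le.trans (hA_le x hx)) _)
  have hlower : ((2 : ℝ) ^ f.totalDegree * A) ^ (-s) ≤ ∫ x in unitCube n, eval x f ^ (-s) := by
    have := setIntegral_ge_of_const_le_real (measurableSet_unitCube n) (by simp)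
      (fun x hx => Real.rpow_le_rpow_of_nonpos (hA.trans_le (hA_le x hx)) (hle_A x hx)
        (neg_nonpos.2 hs.le)) hint
    simpa [measureReal_def] using this
  calc A ^ (-s) = 2 ^ (f.totalDegree * s) * ((2 : ℝ) ^ f.totalDegree * A) ^ (-s) := by
        rw [Real.mul_rpow (by positivity) hA.le, ← Real.rpow_natCast, ← Real.rpow_mul zero_le_two,
          ← mul_assoc, ← Real.rpow_add two_pos]
        simp
    _ ≤ _ := mul_le_mul_of_nonneg_left hlower (by positivity)

theorem sum_rpow_neg_eval_le (hf : ∀ m, 0 ≤ f.coeff m) (hs : 0 < s)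
    (hint : IntegrableOn (fun x => eval x f ^ (-s)) (univ.pi fun _ => Ici 1))
    (T : Finset (ι → ℕ)) (hT : ∀ n ∈ T, ∀ i, 1 ≤ n i) :
    ∑ n ∈ T, eval (fun i => (n i : ℝ)) f ^ (-s) ≤
      2 ^ (f.totalDegree * s) * ∫ x in univ.pi fun _ => Ici 1, eval x f ^ (-s) := by
  have hnonneg : 0 ≤ᵐ[volume.restrict (univ.pi fun _ => Ici (1 : ℝ))] fun x => eval x f ^ (-s) :=
    ae_restrict_of_forall_mem (MeasurableSet.univ_pi fun _ => measurableSet_Ici) fun x hx =>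
      Real.rpow_nonneg (eval_nonneg_of_coeff_nonneg hf fun i => zero_le_one.trans (hx i trivial)) _
  calc ∑ n ∈ T, eval (fun i => (n i : ℝ)) f ^ (-s)
      ≤ ∑ n ∈ T, 2 ^ (f.totalDegree * s) * ∫ x in unitCube n, eval x f ^ (-s) :=
        Finset.sum_le_sum fun n hn => rpow_neg_eval_le_mul_setIntegral_unitCube hf hs (hT n hn)
          (hint.mono_set (unitCube_subset_pi_Ici_one (hT n hn)))
    _ = 2 ^ (f.totalDegree * s) * ∑ n ∈ T, ∫ x in unitCube n, eval x f ^ (-s) :=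
        (Finset.mul_sum _ _ _).symm
    _ ≤ _ := mul_le_mul_of_nonneg_left
        (sum_setIntegral_le_setIntegral T (fun n _ => measurableSet_unitCube n)
          (pairwise_disjoint_unitCube.set_pairwise _)
          (fun n hn => unitCube_subset_pi_Ici_one (hT n hn)) hint hnonneg)
        (by positivity)

theorem two_rpow_totalDegree_mul_le {r : ℕ} (f : MvPolynomial (Fin r) ℝ) (hs : 0 ≤ s) :
    (2 : ℝ) ^ (f.totalDegree * s) ≤ 2 ^ (f.totalDegree * r * s) + 1 := by
  rcases Nat.eq_zero_or_pos r with rfl | hr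
  · simp [totalDegree_eq_zero_iff_eq_C.mpr f.eq_C_of_isEmpty]
  · have hexp : (f.totalDegree : ℝ) * s ≤ f.totalDegree * r * s := by
      have : (1 : ℝ) ≤ r := Nat.one_le_cast.mpr hr
      rw [mul_right_comm]
      exact le_mul_of_one_le_right (by positivity) this
    linarith [Real.rpow_le_rpow_of_exponent_le one_le_two hexp]

end MvPolynomial

/-- Integral test for multivariate Dirichlet-type series of polynomials: if `f` is a polynomial
in `r` variables with non-negative real coefficients, `s > 0`, and the integral of `f(x̄)^{-s}`
over `[1,∞)^r` is finite, then the series `∑_{x̄ ∈ ℕ^r, xᵢ ≥ 1} f(x̄)^{-s}` converges, and each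
partial sum over `{1,…,N}^r` is bounded by `(2^{κrs}+1) · ∫_{[1,∞)^r} f(x̄)^{-s} dx̄`, where
`κ` is the total degree of `f`. -/
theorem mellin_series_integral_test {r : ℕ} (f : MvPolynomial (Fin r) ℝ)
    (hnn : ∀ m, 0 ≤ f.coeff m) (s : ℝ) (hs : 0 < s)
    (hint : IntegrableOn (fun x : Fin r → ℝ => (MvPolynomial.eval x f) ^ (-s))
      (Set.univ.pi fun _ => Set.Ici (1 : ℝ))) :
    Summable (fun x : Fin r → ℕ+ =>
        (MvPolynomial.eval (fun i => ((x i : ℕ) : ℝ)) f) ^ (-s)) ∧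
    ∀ N : ℕ,
      ∑ x ∈ Finset.Icc (fun _ => 1 : Fin r → ℕ) (fun _ => N),
          (MvPolynomial.eval (fun i => ((x i : ℕ) : ℝ)) f) ^ (-s) ≤
        ((2 : ℝ) ^ (((f.totalDegree : ℝ) * r) * s) + 1) *
          ∫ x in Set.univ.pi fun _ => Set.Ici (1 : ℝ),
            (MvPolynomial.eval x f) ^ (-s) := by
  have hbound := sum_rpow_neg_eval_le hnn hs hint
  set I := ∫ x in univ.pi fun _ => Ici (1 : ℝ), eval x f ^ (-s)
  constructor
  · refine summable_of_sum_le (c := 2 ^ (f.totalDegree * s) * I) (fun x => Real.rpow_nonneg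
      (eval_nonneg_of_coeff_nonneg hnn fun i => Nat.cast_nonneg _) _) fun u => ?_
    have hinj : Set.InjOn (fun (x : Fin r → ℕ+) i => (x i : ℕ)) u := fun x _ y _ hxy =>
      funext fun i => PNat.coe_injective (congrFun hxy i)
    rw [← Finset.sum_image (f := fun n : Fin r → ℕ => eval (fun i => (n i : ℝ)) f ^ (-s)) hinj]
    refine hbound _ fun n hn i => ?_
    obtain ⟨x, -, rfl⟩ := Finset.mem_image.mp hn
    exact (x i).pos
  · intro N
    have hI : 0 ≤ I := setIntegral_nonneg (MeasurableSet.univ_pi fun _ => measurableSet_Ici)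
      fun x hx => Real.rpow_nonneg
        (eval_nonneg_of_coeff_nonneg hnn fun i => zero_le_one.trans (hx i trivial)) _
    exact (hbound _ fun n hn i => (Finset.mem_Icc.mp hn).1 i).trans
      (mul_le_mul_of_nonneg_right (two_rpow_totalDegree_mul_le f hs.le) hI)
end

section
/- Let P = P_1 ⋯ P_κ be a product of κ linear forms in r variables with non-negative real coefficients, each linear form having at least one positive coefficient. For a subset of the variables, define the subpolynomial as the product of those linear factors involving only those variables; for a subpolynomial Q let r(Q) be the number of variables occurring in Q and κ(Q) its number of linear factors. Then the abscissa of convergence of ∑_{x_1,...,x_r=1}^∞ P(x̄)^{-s} equals max over proper subpolynomials Q (including the empty subpolynomial with r(Q)=κ(Q)=0) of (r−r(Q))/(κ−κ(Q)). -/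
open Finset

lemma summable_pnat_rpow_iff {c : ℝ} :
    Summable (fun n : ℕ+ => ((n : ℕ) : ℝ) ^ (-c)) ↔ 1 < c := by
  rw [← Equiv.pnatEquivNat.symm.summable_iff]
  have : ((fun n : ℕ+ => ((n : ℕ) : ℝ) ^ (-c)) ∘ ⇑Equiv.pnatEquivNat.symm)
      = fun n : ℕ => ((n + 1 : ℕ) : ℝ) ^ (-c) := by
    funext n; simp [Equiv.pnatEquivNat]
  rw [this, summable_nat_add_iff (f := fun n : ℕ => ((n : ℕ) : ℝ) ^ (-c)) 1,
    Real.summable_nat_rpow]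
  constructor <;> intro h <;> linarith

lemma summable_pi_rpow {n : ℕ} {c : ℝ} (hc : 1 < c) :
    Summable (fun x : Fin n → ℕ+ => ∏ j, ((x j : ℕ) : ℝ) ^ (-c)) := by
  induction n with
  | zero =>
      simp only [Finset.univ_eq_empty, Finset.prod_empty]
      exact summable_of_finite_support (Set.Finite.subset Set.finite_univ (by simp))
  | succ n ih =>
      rw [← (Fin.consEquiv (fun _ : Fin (n + 1) => ℕ+)).summable_iff]
      have key : ((fun x : Fin (n+1) → ℕ+ => ∏ j, ((x j : ℕ) : ℝ) ^ (-c)) ∘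
            ⇑(Fin.consEquiv (fun _ : Fin (n + 1) => ℕ+)))
          = fun p : ℕ+ × (Fin n → ℕ+) =>
              ((p.1 : ℕ) : ℝ) ^ (-c) * ∏ j, ((p.2 j : ℕ) : ℝ) ^ (-c) := by
        funext p
        simp [Fin.consEquiv, Fin.prod_univ_succ]
      rw [key]
      apply Summable.mul_of_nonneg (summable_pnat_rpow_iff.2 hc) ih
      · intro k; exact Real.rpow_nonneg (by positivity) _
      · intro y; exact Finset.prod_nonneg fun j _ => Real.rpow_nonneg (by positivity) _

lemma not_summable_pi_rpow {ι : Type*} [Fintype ι] (j₀ : ι) {t : ℝ} (ht : t ≤ 1) :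
    ¬ Summable (fun y : ι → ℕ+ => ∏ j, ((y j : ℕ) : ℝ) ^ (-t)) := by
  classical
  intro h
  have hinj : Function.Injective
      (fun n : ℕ+ => (fun j : ι => if j = j₀ then n else 1)) := by
    intro m n hmn
    simpa using congrFun hmn j₀
  have h2 := h.comp_injective hinj
  have key : ((fun y : ι → ℕ+ => ∏ j, ((y j : ℕ) : ℝ) ^ (-t)) ∘
        (fun n : ℕ+ => (fun j : ι => if j = j₀ then n else 1)))
      = fun n : ℕ+ => ((n : ℕ) : ℝ) ^ (-t) := by
    funext n
    simp only [Function.comp]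
    rw [Finset.prod_eq_single j₀]
    · simp
    · intro j _ hj; simp [hj]
    · simp
  rw [key] at h2
  exact absurd (summable_pnat_rpow_iff.1 h2) (by linarith)

lemma not_summable_of_boxes {ι : Type*} [Fintype ι] [Nonempty ι] {h : (ι → ℕ+) → ℝ}
    (hnn : ∀ y, 0 ≤ h y) {c C : ℝ} (hC : 0 < C) (hc0 : 0 ≤ c)
    (hcm : c ≤ (Fintype.card ι : ℝ))
    (hbound : ∀ (y : ι → ℕ+) (B : ℝ), 1 ≤ B → (∀ j, ((y j : ℕ) : ℝ) ≤ B) →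
      C * B ^ (-c) ≤ h y) :
    ¬ Summable h := by
  classical
  intro hs
  set m := Fintype.card ι with hmdef
  set δ : ℝ := C * (2 : ℝ) ^ (-c) with hδdef
  have hδpos : 0 < δ := by
    have : (0:ℝ) < (2:ℝ) ^ (-c) := Real.rpow_pos_of_pos two_pos _
    positivity
  set φ : (k : ℕ) → (ι → Fin (2 ^ k)) → (ι → ℕ+) :=
    fun k z j => ⟨2 ^ k + (z j).1 + 1, Nat.succ_pos _⟩ with hφdef
  have hφinj : ∀ k, Function.Injective (φ k) := by
    intro k z z' hzz
    funext j
    have h1 := congrFun hzz j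
    simp only [hφdef] at h1
    have h2 : 2 ^ k + (z j).1 + 1 = 2 ^ k + (z' j).1 + 1 := congrArg (fun t : ℕ+ => (t : ℕ)) h1
    exact Fin.ext (by omega)
  set E : ℕ → Finset (ι → ℕ+) := fun k => Finset.image (φ k) Finset.univ with hEdef
  have hEmem : ∀ k y, y ∈ E k → ∀ j, 2 ^ k < ((y j : ℕ)) ∧ (y j : ℕ) ≤ 2 ^ (k + 1) := by
    intro k y hy j
    obtain ⟨z, _, rfl⟩ := Finset.mem_image.1 hy
    have hco : ((φ k z j : ℕ)) = 2 ^ k + (z j).1 + 1 := rfl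
    have := (z j).2
    constructor
    · rw [hco]; omega
    · rw [hco, pow_succ]; omega
  have hdisj : ∀ k l : ℕ, k ≠ l → Disjoint (E k) (E l) := by
    intro k l hkl
    rw [Finset.disjoint_left]
    intro y hyk hyl
    obtain ⟨j⟩ : Nonempty ι := inferInstance
    have h1 := hEmem k y hyk j
    have h2 := hEmem l y hyl j
    rcases Nat.lt_or_ge k l with hlt | hge
    · have : 2 ^ (k+1) ≤ 2 ^ l := Nat.pow_le_pow_right (by norm_num) (by omega)
      omega
    · have hlt : l < k := by omega
      have : 2 ^ (l+1) ≤ 2 ^ k := Nat.pow_le_pow_right (by norm_num) (by omega)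
      omega
  have hblock : ∀ k : ℕ, δ ≤ ∑ y ∈ E k, h y := by
    intro k
    have hcard : (E k).card = 2 ^ (k * m) := by
      rw [hEdef]
      rw [Finset.card_image_of_injective _ (hφinj k), Finset.card_univ, Fintype.card_fun]
      rw [Fintype.card_fin, ← pow_mul]
    have hterm : ∀ y ∈ E k, C * ((2:ℝ) ^ (k+1 : ℕ)) ^ (-c) ≤ h y := by
      intro y hy
      refine hbound y _ (one_le_pow₀ one_le_two) fun j => ?_
      have := (hEmem k y hy j).2
      calc ((y j : ℕ) : ℝ) ≤ ((2 ^ (k+1) : ℕ) : ℝ) := by exact_mod_cast this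
        _ = (2:ℝ) ^ (k+1 : ℕ) := by push_cast; ring
    have hsumlow : ((E k).card : ℝ) * (C * ((2:ℝ) ^ (k+1 : ℕ)) ^ (-c)) ≤ ∑ y ∈ E k, h y := by
      have := Finset.card_nsmul_le_sum (E k) h (C * ((2:ℝ) ^ (k+1 : ℕ)) ^ (-c)) hterm
      simpa [nsmul_eq_mul] using this
    refine le_trans ?_ hsumlow
    rw [hcard]
    have e1 : ((2:ℝ) ^ (k+1 : ℕ)) ^ (-c) = (2:ℝ) ^ (((k:ℝ)+1) * (-c)) := by
      rw [← Real.rpow_natCast 2 (k+1), ← Real.rpow_mul (by norm_num)]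
      push_cast; ring_nf
    have e2 : (((2:ℕ) ^ (k*m) : ℕ) : ℝ) = (2:ℝ) ^ ((k*m : ℕ) : ℝ) := by
      rw [Real.rpow_natCast]; push_cast; ring
    rw [hδdef, e1]
    push_cast
    rw [show ((2:ℝ) ^ (k*m : ℕ) : ℝ) = (2:ℝ) ^ ((k*m : ℕ) : ℝ) from by rw [Real.rpow_natCast]]
    rw [mul_comm ((2:ℝ) ^ ((k*m : ℕ) : ℝ)) _, mul_assoc]
    apply mul_le_mul_of_nonneg_left _ hC.le
    rw [← Real.rpow_add two_pos]
    apply Real.rpow_le_rpow_of_exponent_le one_le_two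
    push_cast
    have hk0 : (0:ℝ) ≤ (k:ℝ) := Nat.cast_nonneg k
    nlinarith
  obtain ⟨K, hK⟩ := exists_nat_gt ((∑' y, h y) / δ)
  have hsum_le := Summable.sum_le_tsum ((Finset.range K).biUnion E) (fun y _ => hnn y) hs
  have hlow : (K:ℝ) * δ ≤ ∑ y ∈ (Finset.range K).biUnion E, h y := by
    rw [Finset.sum_biUnion (fun k _ l _ hkl => hdisj k l hkl)]
    calc (K:ℝ) * δ = ∑ _k ∈ Finset.range K, δ := by
          rw [Finset.sum_const, Finset.card_range, nsmul_eq_mul]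
      _ ≤ _ := Finset.sum_le_sum fun k _ => hblock k
  have hfin : (K:ℝ) * δ ≤ ∑' y, h y := le_trans hlow hsum_le
  rw [div_lt_iff₀ hδpos] at hK
  linarith

set_option maxHeartbeats 4000000 in
/-- Let `P = P₁ ⋯ P_κ` be a product of `κ` linear forms `Pᵢ = ∑ⱼ aᵢⱼ xⱼ` in `r` variables
with non-negative real coefficients, each form having at least one positive coefficient
(and every variable occurring in some form).  For a subset `S` of the variables, the
corresponding subpolynomial consists of those forms supported on `S`; it has `r(Q) = |S|`
variables and `κ(Q)` linear factors.  The abscissa of convergence of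
`ζ(P;s) = ∑_{x₁,…,x_r ≥ 1} P(x̄)^{-s}` equals the maximum over proper subpolynomials
(i.e. `S ≠` the full variable set, including `S = ∅`) of `(r − r(Q))/(κ − κ(Q))`. -/
theorem mellin_abscissa_eq_max_subpolynomial_ratio {r κ : ℕ} (hr : 0 < r) (hκ : 0 < κ)
    (a : Fin κ → Fin r → ℝ)
    (hnn : ∀ i j, 0 ≤ a i j)
    (hpos : ∀ i, ∃ j, 0 < a i j)
    (hvar : ∀ j, ∃ i, 0 < a i j) :
    sInf {s : ℝ | Summable (fun x : Fin r → ℕ+ =>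
        (∏ i, ∑ j, a i j * ((x j : ℕ) : ℝ)) ^ (-s))} =
      sSup {t : ℝ | ∃ S : Finset (Fin r), S ≠ Finset.univ ∧
        t = ((r : ℝ) - S.card) /
          ((κ : ℝ) - Nat.card {i : Fin κ // ∀ j ∉ S, a i j = 0})} := by
  classical
  -- basic objects
  set P : (Fin r → ℕ+) → ℝ := fun x => ∏ i, ∑ j, a i j * ((x j : ℕ) : ℝ) with hPdef
  have hx1 : ∀ (x : Fin r → ℕ+) (j : Fin r), (1 : ℝ) ≤ ((x j : ℕ) : ℝ) := by
    intro x j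
    exact_mod_cast (x j).one_le
  have hPpos : ∀ x, 0 < P x := by
    intro x
    refine Finset.prod_pos fun i _ => ?_
    obtain ⟨j, hj⟩ := hpos i
    refine Finset.sum_pos' (fun j' _ => mul_nonneg (hnn i j') (by positivity)) ⟨j, Finset.mem_univ j, ?_⟩
    have := hx1 x j
    nlinarith
  set K : Finset (Fin r) → ℕ := fun S => (Finset.univ.filter (fun i => ∀ j ∉ S, a i j = 0)).card
    with hKdef
  have hKcard : ∀ S : Finset (Fin r),
      (Nat.card {i : Fin κ // ∀ j ∉ S, a i j = 0}) = K S := by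
    intro S
    rw [Nat.card_eq_fintype_card, Fintype.card_subtype]
  set g : Finset (Fin r) → ℝ := fun S => ((r : ℝ) - S.card) / ((κ : ℝ) - K S) with hgdef
  have hKlt : ∀ S : Finset (Fin r), S ≠ Finset.univ → K S < κ := by
    intro S hS
    obtain ⟨j, hj⟩ : ∃ j, j ∉ S := by
      by_contra h
      push_neg at h
      exact hS (Finset.eq_univ_iff_forall.2 h)
    obtain ⟨i, hi⟩ := hvar j
    calc K S ≤ (Finset.univ.erase i).card := by
          apply Finset.card_le_card
          intro i' hi'
          simp only [Finset.mem_filter, Finset.mem_univ, true_and] at hi'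
          refine Finset.mem_erase.2 ⟨?_, Finset.mem_univ _⟩
          rintro rfl
          exact absurd (hi' j hj) (ne_of_gt hi)
      _ < κ := by
          rw [Finset.card_erase_of_mem (Finset.mem_univ i)]
          simpa using Nat.sub_lt hκ one_pos
  have hScard : ∀ S : Finset (Fin r), S ≠ Finset.univ → S.card < r := by
    intro S hS
    simpa using Finset.card_lt_card (lt_of_le_of_ne (Finset.subset_univ S) hS)
  -- the finite set of candidate values
  set T₀ : Finset ℝ :=
    (Finset.univ.filter (fun S : Finset (Fin r) => S ≠ Finset.univ)).image g with hT₀def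
  have hT₀ne : T₀.Nonempty := by
    refine ⟨g ∅, Finset.mem_image.2 ⟨∅, ?_, rfl⟩⟩
    simp only [Finset.mem_filter, Finset.mem_univ, true_and]
    intro h
    have := hScard ∅ -- dummy
    have : (Finset.univ : Finset (Fin r)).card = 0 := by rw [← h]; simp
    simp at this
    omega
  set A : ℝ := T₀.max' hT₀ne with hAdef
  have hA1 : ∀ S : Finset (Fin r), S ≠ Finset.univ → g S ≤ A := by
    intro S hS
    exact Finset.le_max' _ _ (Finset.mem_image.2 ⟨S, by simp [hS], rfl⟩)
  obtain ⟨S₀, hS₀ne, hS₀A⟩ : ∃ S₀ : Finset (Fin r), S₀ ≠ Finset.univ ∧ g S₀ = A := by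
    have h0 : T₀.max' hT₀ne ∈ T₀ := T₀.max'_mem hT₀ne
    have h1 : T₀.max' hT₀ne ∈ (Finset.univ.filter
        (fun S : Finset (Fin r) => S ≠ Finset.univ)).image g := h0
    obtain ⟨S, hS, hgS⟩ := Finset.mem_image.1 h1
    exact ⟨S, by simpa using (Finset.mem_filter.1 hS).2, by rw [hAdef]; exact hgS⟩
  have hKempty : K ∅ = 0 := by
    rw [hKdef]
    simp only [Finset.card_eq_zero, Finset.filter_eq_empty_iff]
    intro i _
    obtain ⟨j, hj⟩ := hpos i
    intro h
    exact absurd (h j (Finset.notMem_empty j)) (ne_of_gt hj)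
  have hgpos : ∀ S : Finset (Fin r), S ≠ Finset.univ → 0 < g S := by
    intro S hS
    have h1 : (0:ℝ) < (r : ℝ) - S.card := by
      have := hScard S hS
      have : (S.card : ℝ) < r := by exact_mod_cast this
      linarith
    have h2 : (0:ℝ) < (κ : ℝ) - K S := by
      have := hKlt S hS
      have : (K S : ℝ) < κ := by exact_mod_cast this
      linarith
    positivity
  have hApos : 0 < A := lt_of_lt_of_le (hgpos ∅ (by
    intro h
    have : (Finset.univ : Finset (Fin r)).card = 0 := by rw [← h]; simp
    simp at this; omega)) (hA1 _ (by
    intro h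
    have : (Finset.univ : Finset (Fin r)).card = 0 := by rw [← h]; simp
    simp at this; omega))
  -- main analytic facts
  have Hconv : ∀ s : ℝ, A < s → Summable (fun x : Fin r → ℕ+ => P x ^ (-s)) := by
    intro s hAs
    have hspos : 0 < s := lt_trans hApos hAs
    set N : Fin r → Finset (Fin κ) := fun j => Finset.univ.filter (fun i => 0 < a i j)
      with hNdef
    have hTA : ∀ T : Finset (Fin r), T.Nonempty →
        (T.card : ℝ) ≤ A * ((T.biUnion N).card) := by
      intro T hT
      obtain ⟨j, hjT⟩ := hT
      have hSne : Tᶜ ≠ Finset.univ := by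
        intro h
        have h2 : j ∈ Tᶜ := h ▸ Finset.mem_univ j
        rw [Finset.mem_compl] at h2
        exact h2 hjT
      have hbi : T.biUnion N =
          (Finset.univ.filter (fun i : Fin κ => ∀ j' ∉ Tᶜ, a i j' = 0))ᶜ := by
        ext i
        simp only [Finset.mem_biUnion, hNdef, Finset.mem_filter, Finset.mem_univ, true_and,
          Finset.mem_compl, not_forall]
        constructor
        · rintro ⟨j', hj', hj'pos⟩
          exact ⟨j', by simpa using hj', fun h => absurd h (ne_of_gt hj'pos)⟩
        · rintro ⟨j', hj', hne⟩
          exact ⟨j', by simpa using hj',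
            lt_of_le_of_ne (hnn i j') (Ne.symm (by simpa using hne))⟩
      have hKle : K Tᶜ ≤ κ := by
        calc K Tᶜ ≤ (Finset.univ : Finset (Fin κ)).card := Finset.card_filter_le _ _
          _ = κ := by simp
      have hcard : ((T.biUnion N).card : ℝ) = (κ : ℝ) - K Tᶜ := by
        rw [hbi, Finset.card_compl, Fintype.card_fin, Nat.cast_sub hKle]
      have hgle := hA1 Tᶜ hSne
      simp only [hgdef] at hgle
      have hpos2 : (0:ℝ) < (κ:ℝ) - K Tᶜ := by
        have h3 := hKlt Tᶜ hSne
        have h4 : ((K Tᶜ : ℕ) : ℝ) < κ := by exact_mod_cast h3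
        linarith
      have hTle : T.card ≤ r := by
        calc T.card ≤ (Finset.univ : Finset (Fin r)).card := Finset.card_le_univ T
          _ = r := by simp
      have hnum : (r : ℝ) - (Tᶜ).card = T.card := by
        rw [Finset.card_compl, Fintype.card_fin, Nat.cast_sub hTle]
        ring
      rw [hnum] at hgle
      rw [div_le_iff₀ hpos2] at hgle
      rw [hcard]
      linarith
    -- choose a rational u = p / q with 1/s < u < 1/A
    obtain ⟨ρ, hρ1, hρ2⟩ := exists_rat_btwn (one_div_lt_one_div_of_lt hApos hAs)
    have hρpos : (0:ℝ) < (ρ:ℝ) := lt_trans (by positivity) hρ1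
    set q : ℕ := ρ.den with hqdef
    set p : ℕ := ρ.num.toNat with hpdef
    have hq : 0 < q := ρ.pos
    have hnum0 : 0 ≤ ρ.num := le_of_lt (Rat.num_pos.2 (by exact_mod_cast hρpos))
    have hpz : ((p:ℕ):ℤ) = ρ.num := by rw [hpdef]; exact Int.toNat_of_nonneg hnum0
    have hpq : (ρ : ℝ) = (p : ℝ) / q := by
      rw [Rat.cast_def]
      congr 1
      · exact_mod_cast hpz.symm
    set u : ℝ := (p:ℝ)/q with hudef
    have hu1 : 1/s < u := hpq ▸ hρ1
    have hu2 : u < 1/A := hpq ▸ hρ2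
    have hsu : 1 < s * u := by
      rw [div_lt_iff₀ hspos] at hu1
      linarith
    -- Hall's marriage theorem to distribute weights
    have hallcond : ∀ s' : Finset (Fin r × Fin p),
        s'.card ≤ (s'.biUnion (fun jc => (N jc.1) ×ˢ (Finset.univ : Finset (Fin q)))).card := by
      intro s'
      rcases s'.eq_empty_or_nonempty with rfl | hs'
      · simp
      set T := s'.image Prod.fst with hTdef
      have hTne : T.Nonempty := hs'.image _
      have h1 : s'.card ≤ T.card * p := by
        have hsub : s' ⊆ T ×ˢ (Finset.univ : Finset (Fin p)) := fun jc hjc =>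
          Finset.mem_product.2 ⟨Finset.mem_image_of_mem _ hjc, Finset.mem_univ _⟩
        calc s'.card ≤ (T ×ˢ (Finset.univ : Finset (Fin p))).card := Finset.card_le_card hsub
          _ = T.card * p := by rw [Finset.card_product]; simp
      have hbi2 : s'.biUnion (fun jc => (N jc.1) ×ˢ (Finset.univ : Finset (Fin q)))
          = (T.biUnion N) ×ˢ (Finset.univ : Finset (Fin q)) := by
        ext ⟨i, dq⟩
        simp only [Finset.mem_biUnion, Finset.mem_product, Finset.mem_univ, and_true,
          Finset.mem_image, hTdef]
        constructor
        · rintro ⟨⟨j, c⟩, hmem, hin⟩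
          exact ⟨j, ⟨⟨j, c⟩, hmem, rfl⟩, hin⟩
        · rintro ⟨j, ⟨⟨j', c⟩, hjc, rfl⟩, hin⟩
          exact ⟨(j', c), hjc, hin⟩
      rw [hbi2, Finset.card_product]
      simp only [Finset.card_univ, Fintype.card_fin]
      have hTA' := hTA T hTne
      have hmTpos : (0:ℝ) < ((T.biUnion N).card : ℝ) := by
        obtain ⟨j, hj⟩ := hTne
        obtain ⟨i, hi⟩ := hvar j
        have hmem : i ∈ T.biUnion N := Finset.mem_biUnion.2 ⟨j, hj, by simp [hNdef, hi]⟩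
        have hc := Finset.card_pos.2 ⟨i, hmem⟩
        exact_mod_cast hc
      have hApq : (p:ℝ) * A ≤ q := by
        rw [hudef, div_lt_div_iff₀ (by exact_mod_cast hq) hApos] at hu2
        linarith
      have hreal : (T.card : ℝ) * p ≤ ((T.biUnion N).card : ℝ) * q := by
        calc (T.card : ℝ) * p ≤ (A * ((T.biUnion N).card)) * p := by
              apply mul_le_mul_of_nonneg_right hTA' (Nat.cast_nonneg p)
          _ = ((T.biUnion N).card : ℝ) * ((p:ℝ) * A) := by ring
          _ ≤ ((T.biUnion N).card : ℝ) * q :=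
              mul_le_mul_of_nonneg_left hApq (le_of_lt hmTpos)
      have hnat : T.card * p ≤ (T.biUnion N).card * q := by exact_mod_cast hreal
      omega
    obtain ⟨Φ, hΦinj, hΦmem⟩ := (Finset.all_card_le_biUnion_card_iff_exists_injective
      (fun jc : Fin r × Fin p => (N jc.1) ×ˢ (Finset.univ : Finset (Fin q)))).1 hallcond
    set b : Fin κ → Fin r → ℕ := fun i j =>
      ((Finset.univ : Finset (Fin p)).filter (fun cp => (Φ (j, cp)).1 = i)).card with hbdef
    have hb1 : ∀ j, ∑ i, b i j = p := by
      intro j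
      calc ∑ i, b i j = ∑ i, ∑ cp : Fin p, (if (Φ (j,cp)).1 = i then 1 else 0) :=
            Finset.sum_congr rfl fun i _ => by
              rw [hbdef]; exact Finset.card_filter _ _
        _ = ∑ cp : Fin p, ∑ i, (if (Φ (j,cp)).1 = i then 1 else 0) := Finset.sum_comm
        _ = ∑ cp : Fin p, 1 := by
            refine Finset.sum_congr rfl fun cp _ => ?_
            rw [Finset.sum_ite_eq]
            simp
        _ = p := by simp
    have hb2 : ∀ i, ∑ j, b i j ≤ q := by
      intro i
      have heq : ∑ j, b i j =
          ((Finset.univ : Finset (Fin r × Fin p)).filter (fun jc => (Φ jc).1 = i)).card := by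
        rw [Finset.card_filter, Fintype.sum_prod_type]
        refine Finset.sum_congr rfl fun j _ => ?_
        rw [hbdef]; exact Finset.card_filter _ _
      rw [heq]
      have hle : ((Finset.univ : Finset (Fin r × Fin p)).filter
            (fun jc => (Φ jc).1 = i)).card ≤ (Finset.univ : Finset (Fin q)).card := by
        apply Finset.card_le_card_of_injOn (fun jc => (Φ jc).2)
          (fun jc _ => Finset.mem_univ _)
        intro x hx y hy hxy
        apply hΦinj
        have hx1 : (Φ x).1 = i := (Finset.mem_filter.1 (Finset.mem_coe.1 hx)).2
        have hy1 : (Φ y).1 = i := (Finset.mem_filter.1 (Finset.mem_coe.1 hy)).2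
        exact Prod.ext (hx1.trans hy1.symm) hxy
      simpa using hle
    have hb3 : ∀ i j, b i j ≠ 0 → 0 < a i j := by
      intro i j hb
      obtain ⟨cp, hcp⟩ := Finset.card_pos.1 (Nat.pos_of_ne_zero hb)
      have h1 : (Φ (j, cp)).1 = i := (Finset.mem_filter.1 hcp).2
      have h2 := hΦmem (j, cp)
      rw [Finset.mem_product] at h2
      have h3 := h2.1
      rw [h1] at h3
      simpa [hNdef] using h3
    -- pointwise lower bound for P
    set Sp : Fin κ → Finset (Fin r) := fun i => Finset.univ.filter (fun j => 0 < a i j)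
      with hSpdef
    have hNne : ∀ i, (Sp i).Nonempty := by
      intro i
      obtain ⟨j, hj⟩ := hpos i
      exact ⟨j, by simp [hSpdef, hj]⟩
    set ε : Fin κ → ℝ := fun i => (Sp i).inf' (hNne i) (a i) with hεdef
    have hεpos : ∀ i, 0 < ε i := by
      intro i
      rw [hεdef]
      rw [Finset.lt_inf'_iff]
      intro j hj
      exact (Finset.mem_filter.1 hj).2
    set Cε : ℝ := ∏ i, ε i with hCεdef
    have hCεpos : 0 < Cε := Finset.prod_pos fun i _ => hεpos i
    have hlow : ∀ x : Fin r → ℕ+, Cε * ∏ j, ((x j : ℕ):ℝ) ^ u ≤ P x := by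
      intro x
      have hper : ∀ i : Fin κ,
          ε i * ∏ j, ((x j : ℕ):ℝ) ^ ((b i j : ℝ)/q) ≤ ∑ j, a i j * ((x j:ℕ):ℝ) := by
        intro i
        have hM1 : 1 ≤ (Sp i).sup' (hNne i) (fun j => ((x j : ℕ):ℝ)) := by
          obtain ⟨j, hj⟩ := hNne i
          exact le_trans (hx1 x j) (Finset.le_sup' (fun j => ((x j : ℕ):ℝ)) hj)
        have hMpos : 0 < (Sp i).sup' (hNne i) (fun j => ((x j : ℕ):ℝ)) :=
          lt_of_lt_of_le one_pos hM1
        have hstep1 : ∏ j, ((x j : ℕ):ℝ) ^ ((b i j : ℝ)/q) ≤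
            (Sp i).sup' (hNne i) (fun j => ((x j : ℕ):ℝ)) := by
          have hle : ∏ j, ((x j : ℕ):ℝ) ^ ((b i j : ℝ)/q) ≤
              ∏ j, ((Sp i).sup' (hNne i) (fun j => ((x j : ℕ):ℝ))) ^ ((b i j : ℝ)/q) := by
            refine Finset.prod_le_prod (fun j _ => Real.rpow_nonneg (by positivity) _)
              (fun j _ => ?_)
            rcases Nat.eq_zero_or_pos (b i j) with hbz | hbz
            · simp [hbz]
            · refine Real.rpow_le_rpow (by positivity) ?_ (by positivity)
              have hj : j ∈ Sp i := by
                rw [hSpdef]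
                exact Finset.mem_filter.2 ⟨Finset.mem_univ _, hb3 i j (Nat.pos_iff_ne_zero.1 hbz)⟩
              exact Finset.le_sup' (fun j => ((x j : ℕ):ℝ)) hj
          refine le_trans hle ?_
          rw [← Real.rpow_sum_of_pos hMpos]
          calc ((Sp i).sup' (hNne i) fun j => ((x j : ℕ):ℝ)) ^ (∑ j, (b i j:ℝ)/q)
              ≤ ((Sp i).sup' (hNne i) fun j => ((x j : ℕ):ℝ)) ^ (1:ℝ) := by
                apply Real.rpow_le_rpow_of_exponent_le hM1
                rw [← Finset.sum_div, div_le_one (by exact_mod_cast hq)]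
                exact_mod_cast hb2 i
            _ = _ := Real.rpow_one _
        obtain ⟨j1, hj1, hMe⟩ := Finset.exists_mem_eq_sup' (hNne i) (fun j => ((x j : ℕ):ℝ))
        have hεle : ε i ≤ a i j1 := Finset.inf'_le _ hj1
        have hsingle : a i j1 * ((x j1 : ℕ):ℝ) ≤ ∑ j, a i j * ((x j:ℕ):ℝ) :=
          Finset.single_le_sum (f := fun j => a i j * ((x j : ℕ):ℝ))
            (fun j _ => mul_nonneg (hnn i j) (by positivity)) (Finset.mem_univ j1)
        calc ε i * ∏ j, ((x j:ℕ):ℝ) ^ ((b i j:ℝ)/q)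
            ≤ ε i * (Sp i).sup' (hNne i) (fun j => ((x j : ℕ):ℝ)) :=
              mul_le_mul_of_nonneg_left hstep1 (hεpos i).le
          _ = ε i * ((x j1:ℕ):ℝ) := by rw [hMe]
          _ ≤ a i j1 * ((x j1:ℕ):ℝ) := mul_le_mul_of_nonneg_right hεle (by positivity)
          _ ≤ _ := hsingle
      calc Cε * ∏ j, ((x j:ℕ):ℝ) ^ u
          = ∏ i, (ε i * ∏ j, ((x j:ℕ):ℝ) ^ ((b i j:ℝ)/q)) := by
            rw [Finset.prod_mul_distrib, hCεdef]
            congr 1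
            rw [Finset.prod_comm]
            refine Finset.prod_congr rfl fun j _ => ?_
            rw [← Real.rpow_sum_of_pos (by positivity : (0:ℝ) < ((x j:ℕ):ℝ))]
            congr 1
            rw [← Finset.sum_div]
            have hsumb : (∑ i, ((b i j : ℕ):ℝ)) = (p:ℝ) := by
              rw [← Nat.cast_sum]
              exact_mod_cast congrArg (fun n : ℕ => ((n:ℕ):ℝ)) (hb1 j)
            rw [hsumb, hudef]
        _ ≤ ∏ i, (∑ j, a i j * ((x j:ℕ):ℝ)) :=
            Finset.prod_le_prod
              (fun i _ => mul_nonneg (hεpos i).le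
                (Finset.prod_nonneg fun j _ => Real.rpow_nonneg (by positivity) _))
              (fun i _ => hper i)
        _ = P x := rfl
    have hbound : ∀ x : Fin r → ℕ+,
        P x ^ (-s) ≤ Cε ^ (-s) * ∏ j, ((x j:ℕ):ℝ) ^ (-(s*u)) := by
      intro x
      have hprodpos : (0:ℝ) < Cε * ∏ j, ((x j:ℕ):ℝ) ^ u := by
        apply mul_pos hCεpos
        exact Finset.prod_pos fun j _ => Real.rpow_pos_of_pos (by positivity) _
      calc P x ^ (-s) ≤ (Cε * ∏ j, ((x j:ℕ):ℝ) ^ u) ^ (-s) :=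
            Real.rpow_le_rpow_of_nonpos hprodpos (hlow x) (by linarith)
        _ = Cε^(-s) * ∏ j, ((x j:ℕ):ℝ)^(-(s*u)) := by
            rw [Real.mul_rpow hCεpos.le
              (Finset.prod_nonneg fun j _ => Real.rpow_nonneg (by positivity) _)]
            congr 1
            rw [← Real.finset_prod_rpow _ _ (fun j _ => Real.rpow_nonneg (by positivity) u) (-s)]
            refine Finset.prod_congr rfl fun j _ => ?_
            rw [← Real.rpow_mul (by positivity)]
            congr 1
            ring
    exact Summable.of_nonneg_of_le (fun x => Real.rpow_nonneg (hPpos x).le _) hbound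
      ((summable_pi_rpow hsu).mul_left _)
  have Hdiv : ∀ s : ℝ, s ≤ A → ¬ Summable (fun x : Fin r → ℕ+ => P x ^ (-s)) := by
    intro s hsA hsum
    haveI : Nonempty (Fin r) := ⟨⟨0, hr⟩⟩
    haveI : Infinite (Fin r → ℕ+) := Infinite.of_injective (fun n : ℕ+ => fun _ => n)
      (fun mo n h => congrFun h ⟨0, hr⟩)
    set p₀ : ℝ := ∏ i, ∑ j, a i j with hp₀def
    have hp₀pos : 0 < p₀ := by
      refine Finset.prod_pos fun i _ => ?_
      obtain ⟨j, hj⟩ := hpos i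
      exact Finset.sum_pos' (fun j' _ => hnn i j') ⟨j, Finset.mem_univ j, hj⟩
    by_cases hs0 : s ≤ 0
    · -- terms are bounded below by a positive constant
      have hδ : ∀ x : Fin r → ℕ+, p₀ ^ (-s) ≤ P x ^ (-s) := by
        intro x
        refine Real.rpow_le_rpow (le_of_lt hp₀pos) ?_ (by linarith)
        refine Finset.prod_le_prod (fun i _ => Finset.sum_nonneg fun j _ => hnn i j)
          (fun i _ => Finset.sum_le_sum fun j _ => ?_)
        exact le_mul_of_one_le_right (hnn i j) (hx1 x j)
      have hδpos : 0 < p₀ ^ (-s) := Real.rpow_pos_of_pos hp₀pos _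
      have h3 := hsum.tendsto_cofinite_zero.eventually_lt_const hδpos
      have h4 : ∀ᶠ (x : Fin r → ℕ+) in Filter.cofinite, False :=
        h3.mono fun x hx => absurd (hδ x) (not_le.2 hx)
      exact Filter.cofinite_neBot.ne (Filter.eventually_false_iff_eq_bot.1 h4)
    · push_neg at hs0
      -- the subpolynomial S₀ witnesses divergence
      obtain ⟨j₀, hj₀⟩ : ∃ j, j ∉ S₀ := by
        by_contra h
        push_neg at h
        exact hS₀ne (Finset.eq_univ_iff_forall.2 h)
      haveI hιne : Nonempty {j : Fin r // j ∉ S₀} := ⟨⟨j₀, hj₀⟩⟩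
      have hιcard : Fintype.card {j : Fin r // j ∉ S₀} = r - S₀.card := by
        simp only [Fintype.card_subtype]
        rw [show Finset.univ.filter (fun j => j ∉ S₀) = S₀ᶜ from by ext j; simp,
          Finset.card_compl, Fintype.card_fin]
      set m : ℕ := r - S₀.card with hmdef
      set d : ℕ := κ - K S₀ with hddef
      have hmpos : 0 < m := by have := hScard S₀ hS₀ne; omega
      have hdpos : 0 < d := by have := hKlt S₀ hS₀ne; omega
      have hmr : ((m : ℕ) : ℝ) = (r : ℝ) - S₀.card := by
        rw [hmdef, Nat.cast_sub (le_of_lt (hScard S₀ hS₀ne))]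
      have hdr : ((d : ℕ) : ℝ) = (κ : ℝ) - K S₀ := by
        rw [hddef, Nat.cast_sub (le_of_lt (hKlt S₀ hS₀ne))]
      have hAeq : A = (m : ℝ) / d := by
        rw [← hS₀A]
        simp only [hgdef]
        rw [hmr, hdr]
      set e : ({j : Fin r // j ∉ S₀} → ℕ+) → (Fin r → ℕ+) :=
        fun y j => if h : j ∈ S₀ then 1 else y ⟨j, h⟩ with hedef
      have einj : Function.Injective e := by
        intro y y' h
        funext j
        have hj := congrFun h j.1
        simp only [hedef, dif_neg j.2] at hj
        simpa using hj
      have h2 : Summable (fun y : {j : Fin r // j ∉ S₀} → ℕ+ => P (e y) ^ (-s)) :=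
        hsum.comp_injective einj
      refine not_summable_of_boxes (c := s * d) (C := p₀ ^ (-s))
        (fun y => Real.rpow_nonneg (le_of_lt (hPpos _)) _)
        (Real.rpow_pos_of_pos hp₀pos (-s)) (by positivity)
        ?_ ?_ h2
      · -- s * d ≤ card
        rw [hιcard]
        have hsA' : s ≤ (m : ℝ) / d := hAeq ▸ hsA
        rw [le_div_iff₀ (by exact_mod_cast hdpos)] at hsA'
        calc s * d ≤ (m : ℝ) := hsA'
          _ = ((r - S₀.card : ℕ) : ℝ) := by rw [hmdef]
      · intro y B hB1 hBy
        -- P (e y) ≤ p₀ * B ^ d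
        have heyle : ∀ j : Fin r, ((e y j : ℕ) : ℝ) ≤ B := by
          intro j
          by_cases hj : j ∈ S₀
          · simp only [hedef, dif_pos hj]
            simpa using hB1
          · simp only [hedef, dif_neg hj]
            exact hBy ⟨j, hj⟩
        have hBpos : (0:ℝ) < B := lt_of_lt_of_le one_pos hB1
        have hPle : P (e y) ≤ p₀ * B ^ (d : ℕ) := by
          have step : ∀ i : Fin κ,
              (∑ j, a i j * ((e y j : ℕ) : ℝ)) ≤
                (∑ j, a i j) * (if (∀ j ∉ S₀, a i j = 0) then 1 else B) := by
            intro i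
            by_cases hi : ∀ j ∉ S₀, a i j = 0
            · simp only [if_pos hi, mul_one]
              refine Finset.sum_le_sum fun j _ => ?_
              by_cases hj : j ∈ S₀
              · simp only [hedef, dif_pos hj]
                simp
              · simp [hi j hj]
            · simp only [if_neg hi]
              rw [Finset.sum_mul]
              exact Finset.sum_le_sum fun j _ =>
                mul_le_mul_of_nonneg_left (heyle j) (hnn i j)
          calc P (e y) ≤ ∏ i, ((∑ j, a i j) * (if (∀ j ∉ S₀, a i j = 0) then 1 else B)) :=
                Finset.prod_le_prod
                  (fun i _ => Finset.sum_nonneg fun j _ =>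
                    mul_nonneg (hnn i j) (by positivity)) (fun i _ => step i)
            _ = p₀ * ∏ i, (if (∀ j ∉ S₀, a i j = 0) then 1 else B) := by
                rw [Finset.prod_mul_distrib]
            _ = p₀ * B ^ (d : ℕ) := by
                congr 1
                rw [Finset.prod_ite, Finset.prod_const_one, one_mul, Finset.prod_const]
                congr 1
                have hcompl : Finset.univ.filter
                    (fun i : Fin κ => ¬ (∀ j ∉ S₀, a i j = 0)) =
                    (Finset.univ.filter (fun i : Fin κ => ∀ j ∉ S₀, a i j = 0))ᶜ := by
                  ext i; simp
                rw [hcompl, Finset.card_compl, Fintype.card_fin]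
            _ = p₀ * B ^ (d : ℕ) := rfl
        have h5 : (p₀ * B ^ (d : ℕ)) ^ (-s) ≤ P (e y) ^ (-s) :=
          Real.rpow_le_rpow_of_nonpos (hPpos (e y)) hPle (by linarith)
        refine le_trans (le_of_eq ?_) h5
        rw [Real.mul_rpow (le_of_lt hp₀pos) (by positivity)]
        congr 1
        rw [← Real.rpow_natCast B d, ← Real.rpow_mul (le_of_lt hBpos)]
        congr 1
        ring

  -- conclusion
  have hset : {s : ℝ | Summable (fun x : Fin r → ℕ+ =>
      (∏ i, ∑ j, a i j * ((x j : ℕ) : ℝ)) ^ (-s))} = Set.Ioi A := by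
    ext s
    simp only [Set.mem_setOf_eq, Set.mem_Ioi]
    constructor
    · intro h
      by_contra hs
      exact Hdiv s (le_of_not_gt hs) h
    · intro h
      exact Hconv s h
  have hset2 : {t : ℝ | ∃ S : Finset (Fin r), S ≠ Finset.univ ∧
      t = ((r : ℝ) - S.card) /
        ((κ : ℝ) - Nat.card {i : Fin κ // ∀ j ∉ S, a i j = 0})} = (T₀ : Set ℝ) := by
    ext t
    simp only [Set.mem_setOf_eq, hT₀def, Finset.coe_image, Set.mem_image, Finset.mem_coe,
      Finset.mem_filter, Finset.mem_univ, true_and]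
    constructor
    · rintro ⟨S, hS, rfl⟩
      exact ⟨S, hS, by simp only [hgdef]; rw [hKcard S]⟩
    · rintro ⟨S, hS, rfl⟩
      exact ⟨S, hS, by simp only [hgdef]; rw [hKcard S]⟩
  rw [hset, hset2, csInf_Ioi]
  exact hT₀ne.csSup_eq_max'.symm
end

section
/- Let F be a complete discretely valued field with ring of integers O and finite residue field, and let n ≥ 1. The subgroup of n-th powers O^{×n} has finite index in O^× if and only if the characteristic of F does not divide n. -/
/-!
If `n ≠ 0` in `O`, every unit `u = 1 + n²t` with `t` in the maximal ideal is an `n`-th power: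
since `(1 + ny)ⁿ = 1 + n²(y + y²q(y))` for a polynomial `q`, it suffices to solve
`y + y²q(y) = t`, and `y ↦ t - y²q(y)` is a contraction of the maximal ideal, so completeness
gives a fixed point. Thus the `n`-th powers contain the kernel of reduction modulo `n²ϖ`, a
subgroup of finite index because the residue field is finite.

In characteristic `p ∣ n` the `n`-th powers lie in the `p`-th powers, and
`z ^ p - 1 = (z - 1) ^ p` has valuation divisible by `p`. Comparing valuations, an equation
`(1 + ϖ^a) z^p = 1 + ϖ^b` with `0 < a < b` forces `p ∣ a`, so the units `1 + ϖ^(pk+1)` lie in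
pairwise distinct cosets of the `p`-th powers.
-/

open Polynomial IsLocalRing

theorem IsLocalRing.isUnit_one_add_of_mem_maximalIdeal {R : Type*} [CommRing R] [IsLocalRing R]
    {x : R} (hx : x ∈ maximalIdeal R) : IsUnit (1 + x) := by
  simpa using isUnit_one_sub_self_of_mem_nonunits (-x) (by simpa using hx)

theorem IsAdicComplete.exists_mem_isFixedPt_of_contracting {R : Type*} [CommRing R]
    {I : Ideal R} [IsAdicComplete I R] {T : R → R} (h0 : T 0 ∈ I)
    (hT : ∀ k, ∀ a ∈ I, ∀ b ∈ I, a - b ∈ I ^ k → T a - T b ∈ I ^ (k + 1)) :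
    ∃ y ∈ I, Function.IsFixedPt T y := by
  let y : ℕ → R := fun k ↦ T^[k] 0
  have hy_zero : y 0 = 0 := rfl
  have hy_succ (k : ℕ) : y (k + 1) = T (y k) := Function.iterate_succ_apply' T k 0
  have hy_mem (k : ℕ) : y k ∈ I := by
    induction k with
    | zero => exact I.zero_mem
    | succ k ih =>
      rw [hy_succ, ← sub_add_cancel (T (y k)) (T 0)]
      exact I.add_mem (by simpa using hT 0 _ ih _ I.zero_mem (by simp)) h0
  have hy_step (k : ℕ) : y (k + 1) - y k ∈ I ^ (k + 1) := by
    induction k with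
    | zero => simpa [hy_succ, hy_zero] using h0
    | succ k ih =>
      have := hT _ _ (hy_mem (k + 1)) _ (hy_mem k) ih
      rwa [← hy_succ, ← hy_succ] at this
  have hy_cauchy {k l : ℕ} (hkl : k ≤ l) : y l - y k ∈ I ^ k := by
    induction l, hkl using Nat.le_induction with
    | base => simp
    | succ l hkl ih =>
      rw [← sub_add_sub_cancel]
      exact add_mem (Ideal.pow_le_pow_right (by omega) (hy_step l)) ih
  obtain ⟨L, hL⟩ := IsPrecomplete.prec' (I := I) y fun hkl ↦ by
    simpa [SModEq.sub_mem] using neg_mem (hy_cauchy hkl)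
  simp only [smul_eq_mul, Ideal.mul_top, SModEq.sub_mem] at hL
  have hL_mem : L ∈ I := by
    have := I.sub_mem (hy_mem 1) (pow_one I ▸ hL 1)
    rwa [sub_sub_cancel] at this
  refine ⟨L, hL_mem, (IsHausdorff.eq_iff_smodEq (I := I)).2 fun k ↦ ?_⟩
  simp only [smul_eq_mul, Ideal.mul_top, SModEq.sub_mem]
  have h1 := hT k _ hL_mem _ (hy_mem k) (by simpa using neg_mem (hL k))
  have h2 := hL (k + 1)
  rw [hy_succ] at h2
  rw [← sub_add_sub_cancel _ (T (y k))]
  exact add_mem (Ideal.pow_le_pow_right (by omega) h1) (Ideal.pow_le_pow_right (by omega) h2)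

theorem IsAdicComplete.exists_mem_add_sq_mul_eval_eq {R : Type*} [CommRing R]
    {I : Ideal R} [IsAdicComplete I R] (q : R[X]) {t : R} (ht : t ∈ I) :
    ∃ y ∈ I, y + y ^ 2 * q.eval y = t := by
  obtain ⟨y, hyI, hy⟩ := exists_mem_isFixedPt_of_contracting (I := I)
    (T := fun y ↦ t - y ^ 2 * q.eval y) (by simpa using ht) fun k a ha b hb hab ↦ by
      obtain ⟨d, hd⟩ := sub_dvd_eval_sub a b q
      have hdiff : (t - a ^ 2 * q.eval a) - (t - b ^ 2 * q.eval b) =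
          (a - b) * -((a + b) * q.eval a + b ^ 2 * d) := by
        linear_combination -b ^ 2 * hd
      rw [hdiff, pow_succ]
      refine Ideal.mul_mem_mul hab (neg_mem (add_mem ?_ ?_))
      · exact I.mul_mem_right _ (add_mem ha hb)
      · exact I.mul_mem_right _ (I.pow_mem_of_mem hb 2 two_pos)
  have hy : t - y ^ 2 * q.eval y = y := hy
  exact ⟨y, hyI, by linear_combination -hy⟩

theorem exists_one_add_mul_pow {R : Type*} [CommRing R] (c : R) (k : ℕ) :
    ∃ q : R[X], ∀ y, (1 + c * y) ^ k = 1 + k * c * y + c ^ 2 * y ^ 2 * q.eval y := by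
  induction k with
  | zero => exact ⟨0, by simp⟩
  | succ k ih =>
    obtain ⟨q, hq⟩ := ih
    refine ⟨q * (1 + C c * X) + C (k : R), fun y ↦ ?_⟩
    simp only [pow_succ, hq, eval_add, eval_mul, eval_one, eval_C, eval_X, Nat.cast_succ]
    ring

theorem IsAdicComplete.mem_range_powMonoidHom {R : Type*} [CommRing R]
    {I : Ideal R} [IsAdicComplete I R] (n : ℕ) {u : Rˣ} {t : R} (ht : t ∈ I)
    (hu : (u : R) = 1 + n ^ 2 * t) : u ∈ (powMonoidHom n : Rˣ →* Rˣ).range := by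
  obtain ⟨q, hq⟩ := exists_one_add_mul_pow (n : R) n
  obtain ⟨y, hyI, hy⟩ := exists_mem_add_sq_mul_eval_eq q ht
  have hunit : IsUnit (1 + n * y) := by
    simpa [add_comm] using Ideal.mem_jacobson_bot.1
      (le_jacobson_bot I (I.mul_mem_left (n : R) hyI)) 1
  refine ⟨hunit.unit, Units.ext ?_⟩
  rw [powMonoidHom_apply, Units.val_pow_eq_pow_val, IsUnit.unit_spec, hq, hu, ← hy]
  ring

namespace IsDiscreteValuationRing

variable {R : Type*} [CommRing R] [IsDomain R] [IsDiscreteValuationRing R]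

theorem pow_mem_maximalIdeal {ϖ : R} (hϖ : Irreducible ϖ) {a : ℕ} (ha : a ≠ 0) :
    ϖ ^ a ∈ IsLocalRing.maximalIdeal R :=
  Ideal.pow_mem_of_mem _ (hϖ.maximalIdeal_eq ▸ Ideal.mem_span_singleton_self ϖ) a (by omega)

theorem finite_quotient_span_singleton [Finite (ResidueField R)] {x : R} (hx : x ≠ 0) :
    Finite (R ⧸ Ideal.span {x}) := by
  obtain ⟨ϖ, hϖ⟩ := exists_irreducible R
  obtain ⟨k, u, rfl⟩ := eq_unit_mul_pow_irreducible hx hϖ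
  refine finite_quotient_iff.2 ⟨k, le_of_eq ?_⟩
  rw [hϖ.maximalIdeal_eq, Ideal.span_singleton_pow, Ideal.span_singleton_mul_left_unit u.isUnit]

theorem finiteIndex_range_powMonoidHom [IsAdicComplete (IsLocalRing.maximalIdeal R) R]
    [Finite (ResidueField R)] {n : ℕ} (hn : (n : R) ≠ 0) :
    (powMonoidHom n : Rˣ →* Rˣ).range.FiniteIndex := by
  obtain ⟨ϖ, hϖ⟩ := exists_irreducible R
  let J := Ideal.span {(n : R) ^ 2 * ϖ}
  have : Finite (R ⧸ J) :=
    finite_quotient_span_singleton (mul_ne_zero (pow_ne_zero 2 hn) hϖ.ne_zero)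
  let φ : Rˣ →* (R ⧸ J)ˣ := Units.map (Ideal.Quotient.mk J)
  refine Subgroup.finiteIndex_of_le (H := φ.ker) fun u hu ↦ ?_
  have hu : (u : R) - 1 ∈ J := by
    rw [← Ideal.Quotient.eq]
    simpa [φ, Units.ext_iff] using hu
  obtain ⟨s, hs⟩ := Ideal.mem_span_singleton'.1 hu
  refine IsAdicComplete.mem_range_powMonoidHom (I := IsLocalRing.maximalIdeal R) n
    (hϖ.maximalIdeal_eq ▸ Ideal.mem_span_singleton'.2 ⟨s, rfl⟩) ?_
  linear_combination -hs

section CharP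

variable {p : ℕ} [Fact p.Prime] [CharP R p]

theorem dvd_of_one_add_pow_mul_pow_char_eq {ϖ : R} (hϖ : Irreducible ϖ) {a b : ℕ}
    (ha : a ≠ 0) (hab : a < b) {z : R} (h : (1 + ϖ ^ a) * z ^ p = 1 + ϖ ^ b) : p ∣ a := by
  have key : (1 + ϖ ^ a) * (z - 1) ^ p = ϖ ^ a * -(1 - ϖ ^ (b - a)) := by
    rw [← pow_mul_pow_sub ϖ hab.le] at h
    rw [sub_pow_char, one_pow]
    linear_combination h
  have hunit₁ := isUnit_one_add_of_mem_maximalIdeal (pow_mem_maximalIdeal hϖ ha)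
  have hunit₂ := isUnit_one_add_of_mem_maximalIdeal
    (neg_mem (pow_mem_maximalIdeal hϖ (Nat.sub_ne_zero_of_lt hab)))
  rw [← sub_eq_add_neg] at hunit₂
  have hval := congrArg (addVal R) key
  simp only [AddValuation.map_mul, AddValuation.map_neg, addVal_pow, addVal_uniformizer hϖ,
    addVal_eq_zero_iff.2 hunit₁, addVal_eq_zero_iff.2 hunit₂, zero_add, add_zero,
    nsmul_eq_mul, mul_one] at hval
  induction h : addVal R (z - 1) using ENat.recTopCoe with
  | top => simp [h, (Fact.out : p.Prime).ne_zero] at hval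
  | coe v => exact ⟨v, by exact_mod_cast h ▸ hval.symm⟩

theorem infinite_quotient_range_powMonoidHom_char :
    Infinite (Rˣ ⧸ (powMonoidHom p : Rˣ →* Rˣ).range) := by
  obtain ⟨ϖ, hϖ⟩ := exists_irreducible R
  let u (k : ℕ) : Rˣ :=
    (isUnit_one_add_of_mem_maximalIdeal (pow_mem_maximalIdeal hϖ (p * k).succ_ne_zero)).unit
  have hne {k l : ℕ} (hkl : k < l) :
      (u k : Rˣ ⧸ (powMonoidHom p).range) ≠ u l := by
    rw [ne_eq, QuotientGroup.eq]
    rintro ⟨w, hw⟩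
    have h : (1 + ϖ ^ (p * k + 1)) * (w : R) ^ p = 1 + ϖ ^ (p * l + 1) := by
      have := congrArg Units.val (inv_mul_eq_iff_eq_mul.1 hw.symm).symm
      simpa [u] using this
    have := dvd_of_one_add_pow_mul_pow_char_eq hϖ (p * k).succ_ne_zero
      (by have := (Fact.out : p.Prime).pos; nlinarith) h
    exact (Fact.out : p.Prime).one_lt.ne'
      (Nat.dvd_one.1 ((Nat.dvd_add_right (dvd_mul_right p k)).1 this))
  refine Infinite.of_injective (fun k ↦ (u k : Rˣ ⧸ (powMonoidHom p).range)) fun k l hkl ↦ ?_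
  by_contra hne'
  rcases lt_or_gt_of_ne hne' with h | h
  exacts [hne h hkl, hne h hkl.symm]

theorem index_range_powMonoidHom_eq_zero {n : ℕ} (hpn : p ∣ n) :
    (powMonoidHom n : Rˣ →* Rˣ).range.index = 0 := by
  obtain ⟨m, rfl⟩ := hpn
  have hle : (powMonoidHom (p * m) : Rˣ →* Rˣ).range ≤ (powMonoidHom p).range := by
    rintro _ ⟨w, rfl⟩
    exact ⟨w ^ m, by simp [← pow_mul, mul_comm]⟩
  have hp_index := Subgroup.index_eq_zero_iff_infinite.2
    (infinite_quotient_range_powMonoidHom_char (R := R) (p := p))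
  exact Nat.eq_zero_of_zero_dvd (hp_index ▸ Subgroup.index_dvd_of_le hle)

end CharP

end IsDiscreteValuationRing

/-- Let `O` be a complete discrete valuation ring with finite residue field and `F` its
fraction field.  The subgroup of `n`-th powers `O^{×n}` has finite index in `O^×` if and
only if the characteristic of `F` does not divide `n`. -/
theorem finiteIndex_powers_iff_char_not_dvd (O : Type*) [CommRing O] [IsDomain O]
    [IsDiscreteValuationRing O]
    [IsAdicComplete (IsLocalRing.maximalIdeal O) O]
    [Finite (IsLocalRing.ResidueField O)]
    (n : ℕ) (hn : 1 ≤ n) :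
    (powMonoidHom n : Oˣ →* Oˣ).range.index ≠ 0 ↔
      ¬ (ringChar (FractionRing O) ∣ n) := by
  have : CharP (FractionRing O) (ringChar O) := IsFractionRing.charP_of_isFractionRing O _
  rw [ringChar.eq (FractionRing O) (ringChar O)]
  constructor
  · intro hindex hdvd
    rcases CharP.char_is_prime_or_zero O (ringChar O) with hp | hp
    · have : Fact (ringChar O).Prime := ⟨hp⟩
      exact hindex (IsDiscreteValuationRing.index_range_powMonoidHom_eq_zero hdvd)
    · rw [hp, zero_dvd_iff] at hdvd
      omega
  · intro hndvd
    exact (IsDiscreteValuationRing.finiteIndex_range_powMonoidHom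
      fun h ↦ hndvd ((ringChar.spec O n).1 h)).index_ne_zero
end

section
/- Let O be a complete discrete valuation ring with finite residue field, F its field of fractions, and μ_n the group of n-th roots of unity in F. Then the quotient Hom(O^×, ℂ^×)/Hom(O^×, ℂ^×)^n of the character group of O^× by its subgroup of n-th powers is isomorphic to Hom(μ_n, ℂ^×); in particular its order equals |μ_n|. -/
/-!
Since `ℂˣ` is divisible, it is an injective `ℤ`-module, so restricting characters of `Oˣ` to the
`n`-torsion `μₙ(O)` is surjective. A character trivial on `μₙ(O)` factors through `x ↦ xⁿ`, and
extending the factor from the subgroup of `n`-th powers exhibits it as an `n`-th power: the kernel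
of restriction is exactly the `n`-th powers. As `O` is integrally closed, `μₙ(O) = μₙ(F)`, and a
finite abelian group is isomorphic to its group of `ℂˣ`-valued characters.
-/

noncomputable instance IsAlgClosed.unitsRootableByNat (k : Type*) [Field k] [IsAlgClosed k] :
    RootableBy kˣ ℕ :=
  rootableByOfPowLeftSurj _ _ fun {n} hn x => by
    obtain ⟨z, hz⟩ := IsAlgClosed.exists_pow_nat_eq (x : k) (Nat.pos_of_ne_zero hn)
    have hz0 : z ≠ 0 := by
      rintro rfl
      exact x.ne_zero (by rw [← hz, zero_pow hn])
    exact ⟨Units.mk0 z hz0, Units.ext (by simpa using hz)⟩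

noncomputable instance IsAlgClosed.unitsRootableByInt (k : Type*) [Field k] [IsAlgClosed k] :
    RootableBy kˣ ℤ :=
  Group.rootableByIntOfRootableByNat _

instance Additive.divisibleByInt {D : Type*} [Group D] [RootableBy D ℤ] :
    DivisibleBy (Additive D) ℤ where
  div a n := .ofMul (RootableBy.root a.toMul n)
  div_zero _ := congrArg Additive.ofMul (RootableBy.root_zero _)
  div_cancel _ hn := congrArg Additive.ofMul (RootableBy.root_cancel _ hn)

namespace MonoidHom

variable {G D : Type*} [CommGroup G] [CommGroup D] [RootableBy D ℤ]

theorem domRestrictHom_surjective_of_rootableBy (H : Subgroup G) :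
    Function.Surjective (domRestrictHom H D) := fun φ => by
  obtain ⟨ψ, hψ⟩ := (Module.Baer.of_divisible (Additive D)).extension_property_addMonoidHom
    (toAdditive H.subtype) H.subtype_injective (toAdditive φ)
  exact ⟨toAdditive.symm ψ, ext fun x => DFunLike.congr_fun hψ x⟩

theorem ker_domRestrictHom_ker_powMonoidHom (n : ℕ) :
    (domRestrictHom (powMonoidHom n : G →* G).ker D).ker =
      (powMonoidHom n : (G →* D) →* (G →* D)).range := by
  ext φ
  constructor
  · intro hφ
    let f := (powMonoidHom n : G →* G).rangeRestrict
    have hf : f.ker ≤ φ.ker := fun x hx =>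
      mem_ker.mpr (DFunLike.congr_fun hφ ⟨x, by rwa [← ker_rangeRestrict]⟩)
    -- `ψ` is `φ` pushed down along `x ↦ xⁿ`, then extended to `χ` on all of `G`.
    let ψ := liftOfRightInverse f _
      (Function.rightInverse_surjInv (rangeRestrict_surjective _)) ⟨φ, hf⟩
    obtain ⟨χ, hχ⟩ := domRestrictHom_surjective_of_rootableBy _ ψ
    refine ⟨χ, ext fun x => ?_⟩
    calc (χ ^ n) x = χ (x ^ n) := by rw [pow_apply, map_pow]
      _ = ψ (f x) := DFunLike.congr_fun hχ (f x)
      _ = φ x := liftOfRightInverse_comp_apply _ _ _ _ x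
  · rintro ⟨χ, rfl⟩
    ext ⟨x, hx : x ^ n = 1⟩
    simp [← map_pow, hx]

noncomputable def quotientRangePowEquiv (n : ℕ) :
    ((G →* D) ⧸ (powMonoidHom n : (G →* D) →* (G →* D)).range) ≃*
      ((powMonoidHom n : G →* G).ker →* D) :=
  (QuotientGroup.quotientMulEquivOfEq (ker_domRestrictHom_ker_powMonoidHom n).symm).trans
    (QuotientGroup.quotientKerEquivOfSurjective _ (domRestrictHom_surjective_of_rootableBy _))

end MonoidHom

theorem IsIntegrallyClosed.restrictRootsOfUnity_algebraMap_bijective (R K : Type*) [CommRing R]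
    [IsDomain R] [IsIntegrallyClosed R] [Field K] [Algebra R K] [IsFractionRing R K]
    (n : ℕ) [NeZero n] : Function.Bijective (restrictRootsOfUnity (algebraMap R K) n) := by
  have hinj := IsFractionRing.injective R K
  refine ⟨fun ζ ξ h => ?_, fun ζ => ?_⟩
  · exact Subtype.ext (Units.ext (hinj (congrArg (fun z : rootsOfUnity n K => ((z : Kˣ) : K)) h)))
  · have hζ : ((ζ : Kˣ) : K) ^ n = 1 := by
      simpa using congrArg Units.val ((mem_rootsOfUnity n _).mp ζ.2)
    obtain ⟨y, hy⟩ := IsIntegrallyClosed.isIntegral_iff.mp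
      (IsIntegral.of_pow (R := R) (NeZero.pos n) (hζ ▸ isIntegral_one))
    have hy1 : y ^ n = 1 := hinj (by rw [map_pow, hy, hζ, map_one])
    exact ⟨rootsOfUnity.mkOfPowEq y hy1, Subtype.ext (Units.ext (by simpa using hy))⟩

theorem characterGroup_quotient_npow_iso_characters_rootsOfUnity_general
    (O : Type*) [CommRing O] [IsDomain O] [IsDiscreteValuationRing O]
    (n : ℕ) (hn : 1 ≤ n) :
    Nonempty
        (((Oˣ →* ℂˣ) ⧸ MonoidHom.range (G := Oˣ →* ℂˣ) (powMonoidHom n)) ≃*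
          (↥(rootsOfUnity n (FractionRing O)) →* ℂˣ)) ∧
      Nat.card ((Oˣ →* ℂˣ) ⧸ MonoidHom.range (G := Oˣ →* ℂˣ) (powMonoidHom n)) =
        Nat.card ↥(rootsOfUnity n (FractionRing O)) := by
  have : NeZero n := NeZero.of_pos hn
  let μ : (powMonoidHom n : Oˣ →* Oˣ).ker ≃* rootsOfUnity n (FractionRing O) :=
    (MulEquiv.subgroupCongr rootsOfUnity_eq_ker.symm).trans <| .ofBijective _ <|
      IsIntegrallyClosed.restrictRootsOfUnity_algebraMap_bijective O (FractionRing O) n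
  let e := (MonoidHom.quotientRangePowEquiv (D := ℂˣ) n).trans μ.monoidHomCongrLeft
  refine ⟨⟨e⟩, ?_⟩
  have : NeZero (Monoid.exponent (rootsOfUnity n (FractionRing O)) : ℂ) :=
    ⟨Nat.cast_ne_zero.mpr Monoid.exponent_ne_zero_of_finite⟩
  rw [Nat.card_congr e.toEquiv]
  exact CommGroup.card_monoidHom_of_hasEnoughRootsOfUnity _ ℂ

/-- Let `O` be a complete discrete valuation ring with finite residue field, `F` its
fraction field and `μₙ` the group of `n`-th roots of unity of `F`.  Then the quotient of
the character group `Hom(O^×, ℂ^×)` by its subgroup of `n`-th powers is isomorphic to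
`Hom(μₙ, ℂ^×)`; in particular its order equals `|μₙ|`. -/
theorem characterGroup_quotient_npow_iso_characters_rootsOfUnity
    (O : Type*) [CommRing O] [IsDomain O] [IsDiscreteValuationRing O]
    [IsAdicComplete (IsLocalRing.maximalIdeal O) O]
    [Finite (IsLocalRing.ResidueField O)]
    (n : ℕ) (hn : 1 ≤ n) :
    Nonempty
        (((Oˣ →* ℂˣ) ⧸ MonoidHom.range (G := Oˣ →* ℂˣ) (powMonoidHom n)) ≃*
          (↥(rootsOfUnity n (FractionRing O)) →* ℂˣ)) ∧
      Nat.card ((Oˣ →* ℂˣ) ⧸ MonoidHom.range (G := Oˣ →* ℂˣ) (powMonoidHom n)) =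
        Nat.card ↥(rootsOfUnity n (FractionRing O)) :=
  characterGroup_quotient_npow_iso_characters_rootsOfUnity_general O n hn
end

section
/- Let O = F_q[[t]] with q a power of 2, and let O_i = O/(t^i). Let τ ∈ O_i with valuation w ≥ 1 (set w = i if τ = 0) and define U(τ) = {x ∈ O_i : x(x+τ) = 0}, a subgroup of (O_i, +). Then U(τ) = t^{i−w}O_i ∪ (τ + t^{i−w}O_i) if w < ⌈i/2⌉, and U(τ) = t^{⌈i/2⌉}O_i if w ≥ ⌈i/2⌉. In particular |U(τ)| = 2q^w if w < ⌈i/2⌉ and |U(τ)| = q^{⌊i/2⌋} if w ≥ ⌈i/2⌉. -/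
/-- The finite chain ring `O_i = F_q[[t]]/(t^i)`. -/
abbrev TruncatedPowerSeries (F : Type*) [Field F] (i : ℕ) : Type _ :=
  PowerSeries F ⧸ Ideal.span {(PowerSeries.X : PowerSeries F) ^ i}

/-- The image of `t` in `O_i = F_q[[t]]/(t^i)`. -/
noncomputable def tquot (F : Type*) [Field F] (i : ℕ) : TruncatedPowerSeries F i :=
  Ideal.Quotient.mk _ (PowerSeries.X : PowerSeries F)

/-!
If `x ∈ O_i` has valuation exactly `a < i`, then `x y = 0` forces `y ∈ t^(i-a) O_i`, because
valuations add in `F[[t]]`. So a solution of `x (x + τ) = 0` has `x + τ ∈ t^(i-a) O_i`; when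
`2a < i` this is deeper than `x`, hence `τ = (x + τ) - x` has valuation `a` as well. Thus a
solution outside `t^⌈i/2⌉ O_i` has valuation `w = v(τ)` and satisfies `x + τ ∈ t^(i-w) O_i`.
Conversely, elements of `t^(i-w) O_i` (resp. `t^⌈i/2⌉ O_i`) are solutions since `x²` and `x τ`
lie in `t^i O_i = 0`, and in characteristic `2` the translation `x ↦ x + τ` permutes the
solutions. The counts follow from `|t^j O_i| = q^(i-j)`, which is `O_i / t^j O_i ≅ O_j`.
-/

open PowerSeries

theorem PowerSeries.X_pow_dvd_iff_le_order {R : Type*} [Semiring R] {n : ℕ} {φ : R⟦X⟧} :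
    X ^ n ∣ φ ↔ (n : ℕ∞) ≤ φ.order := by
  rw [order_eq_emultiplicity_X, pow_dvd_iff_le_emultiplicity]

theorem add_self_eq_zero_of_charTwo_algebra {F A : Type*} [Field F] [CharP F 2] [Ring A]
    [Algebra F A] (x : A) : x + x = 0 := by
  rw [← two_mul, ← map_ofNat (algebraMap F A) 2, CharTwo.two_eq_zero, map_zero, zero_mul]

theorem AddSubgroupClass.card_union_setOf_add_eq_two_mul {G S : Type*} [AddGroup G]
    [SetLike S G] [AddSubgroupClass S G] [Finite G] {A : S} {τ : G} (hτ : τ ∉ A) :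
    Nat.card ↥((A : Set G) ∪ {x | ∃ y ∈ A, x = τ + y}) = 2 * Nat.card A := by
  have hcoset : {x | ∃ y ∈ A, x = τ + y} = (τ + ·) '' (A : Set G) := by
    ext x; simp only [Set.mem_ofPred_eq, Set.mem_image, SetLike.mem_coe, eq_comm]
  have hdisj : Disjoint (A : Set G) ((τ + ·) '' (A : Set G)) := by
    refine Set.disjoint_left.mpr ?_
    rintro _ hx ⟨y, hy, rfl⟩
    exact hτ (by simpa using sub_mem hx hy)
  rw [hcoset, Nat.card_coe_set_eq, Set.ncard_union_eq hdisj,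
    Set.ncard_image_of_injective _ (add_right_injective τ), two_mul, ← Nat.card_coe_set_eq]
  rfl

namespace TruncatedPowerSeries

variable {F : Type*} [Field F] {i : ℕ}

theorem mk_eq_mk_iff_coeff {f g : F⟦X⟧} :
    (Ideal.Quotient.mk (Ideal.span {X ^ i}) f = Ideal.Quotient.mk _ g) ↔
      ∀ m < i, coeff m f = coeff m g := by
  simp [Ideal.Quotient.eq, Ideal.mem_span_singleton, X_pow_dvd_iff, sub_eq_zero]

theorem card_eq [Fintype F] (n : ℕ) :
    Nat.card (TruncatedPowerSeries F n) = Fintype.card F ^ n := by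
  let e : (Fin n → F) → TruncatedPowerSeries F n := fun c =>
    Ideal.Quotient.mk _ (PowerSeries.mk fun m => if h : m < n then c ⟨m, h⟩ else 0)
  have he : e.Bijective := by
    refine ⟨fun c c' hcc' => funext fun m => ?_, fun x => ?_⟩
    · simpa [m.2] using mk_eq_mk_iff_coeff.mp hcc' m m.2
    · obtain ⟨f, rfl⟩ := Ideal.Quotient.mk_surjective x
      exact ⟨fun m => coeff m f, mk_eq_mk_iff_coeff.mpr fun m hm => by simp [hm]⟩
  rw [← Nat.card_eq_of_bijective e he]
  simp

instance [Finite F] : Finite (TruncatedPowerSeries F i) := by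
  have := Fintype.ofFinite F
  exact Nat.finite_of_card_ne_zero (by simp [card_eq])

theorem tquot_pow (j : ℕ) : tquot F i ^ j = Ideal.Quotient.mk _ (X ^ j) := by
  rw [tquot, map_pow]

theorem tquot_pow_self : tquot F i ^ i = 0 := by
  rw [tquot_pow, Ideal.Quotient.eq_zero_iff_mem]
  exact Ideal.mem_span_singleton_self _

theorem span_tquot_pow (j : ℕ) :
    Ideal.span {tquot F i ^ j} = (Ideal.span {X ^ j}).map (Ideal.Quotient.mk _) := by
  rw [Ideal.map_span, Set.image_singleton, tquot_pow]

theorem mk_mem_span_tquot_pow_iff {j : ℕ} (hj : j ≤ i) {f : F⟦X⟧} :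
    Ideal.Quotient.mk _ f ∈ Ideal.span {tquot F i ^ j} ↔ X ^ j ∣ f := by
  rw [span_tquot_pow, Ideal.mem_quotient_iff_mem
    (Ideal.span_singleton_le_span_singleton.mpr (pow_dvd_pow X hj)), Ideal.mem_span_singleton]

theorem span_tquot_pow_antitone : Antitone fun j => Ideal.span {tquot F i ^ j} :=
  fun _ _ h => Ideal.span_singleton_le_span_singleton.mpr (pow_dvd_pow _ h)

theorem card_span_tquot_pow [Fintype F] {j : ℕ} (hj : j ≤ i) :
    Nat.card (Ideal.span {tquot F i ^ j}) = Fintype.card F ^ (i - j) := by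
  have h := Submodule.card_eq_card_quotient_mul_card (Ideal.span {tquot F i ^ j})
  rw [span_tquot_pow] at h ⊢
  rw [Nat.card_congr (DoubleQuot.quotQuotEquivQuotOfLE
    (Ideal.span_singleton_le_span_singleton.mpr (pow_dvd_pow X hj))).toEquiv,
    card_eq, card_eq] at h
  have hq : Fintype.card F ^ i = Fintype.card F ^ (i - j) * Fintype.card F ^ j := by
    rw [← pow_add, Nat.sub_add_cancel hj]
  exact (Nat.eq_of_mul_eq_mul_right (by positivity) (hq ▸ h)).symm

theorem mul_eq_zero_of_mem_span {a b : ℕ} (hab : i ≤ a + b)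
    {x y : TruncatedPowerSeries F i} (hx : x ∈ Ideal.span {tquot F i ^ a})
    (hy : y ∈ Ideal.span {tquot F i ^ b}) : x * y = 0 := by
  have hxy := Ideal.mul_mem_mul hx hy
  rw [Ideal.span_singleton_mul_span_singleton, ← pow_add] at hxy
  simpa [tquot_pow_self] using span_tquot_pow_antitone hab hxy

theorem mul_add_eq_zero_of_mem_span {a b : ℕ} (ha : i ≤ a + a) (hab : i ≤ a + b)
    {x τ : TruncatedPowerSeries F i} (hx : x ∈ Ideal.span {tquot F i ^ a})
    (hτ : τ ∈ Ideal.span {tquot F i ^ b}) : x * (x + τ) = 0 := by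
  rw [mul_add, mul_eq_zero_of_mem_span ha hx hx, mul_eq_zero_of_mem_span hab hx hτ, add_zero]

def HasValuation (x : TruncatedPowerSeries F i) (a : ℕ) : Prop :=
  x ∈ Ideal.span {tquot F i ^ a} ∧ x ∉ Ideal.span {tquot F i ^ (a + 1)}

theorem exists_hasValuation_of_notMem {x : TruncatedPowerSeries F i} {n : ℕ}
    (h : x ∉ Ideal.span {tquot F i ^ n}) : ∃ a < n, HasValuation x a := by
  induction n with
  | zero => simp [Ideal.span_singleton_one] at h
  | succ k ih =>
    by_cases hk : x ∈ Ideal.span {tquot F i ^ k}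
    · exact ⟨k, k.lt_succ_self, hk, h⟩
    · obtain ⟨a, ha, hxa⟩ := ih hk
      exact ⟨a, by omega, hxa⟩

namespace HasValuation

variable {x y τ : TruncatedPowerSeries F i} {a : ℕ}

theorem le_of_mem (hx : HasValuation x a) {w : ℕ} (hw : x ∈ Ideal.span {tquot F i ^ w}) :
    w ≤ a := by
  by_contra! h
  exact hx.2 (span_tquot_pow_antitone h hw)

theorem order_eq (ha : a < i) {f : F⟦X⟧}
    (hf : HasValuation (Ideal.Quotient.mk (Ideal.span {X ^ i}) f) a) : f.order = a := by
  obtain ⟨h1, h2⟩ := hf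
  rw [mk_mem_span_tquot_pow_iff ha.le, X_pow_dvd_iff_le_order] at h1
  rw [mk_mem_span_tquot_pow_iff ha, X_pow_dvd_iff_le_order, not_le] at h2
  exact le_antisymm (Order.le_of_lt_add_one h2) h1

theorem mem_of_mul_eq_zero (hx : HasValuation x a) (ha : a < i) (h : x * y = 0) :
    y ∈ Ideal.span {tquot F i ^ (i - a)} := by
  obtain ⟨f, rfl⟩ := Ideal.Quotient.mk_surjective x
  obtain ⟨g, rfl⟩ := Ideal.Quotient.mk_surjective y
  rw [← map_mul, Ideal.Quotient.eq_zero_iff_mem, Ideal.mem_span_singleton,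
    X_pow_dvd_iff_le_order, order_mul, hx.order_eq ha] at h
  rw [mk_mem_span_tquot_pow_iff (Nat.sub_le i a), X_pow_dvd_iff_le_order, ENat.natCast_sub]
  exact tsub_le_iff_left.mpr h

theorem of_mul_add_eq_zero (hx : HasValuation x a) (ha : 2 * a < i) (h : x * (x + τ) = 0) :
    HasValuation τ a := by
  have hxτ : x + τ ∈ Ideal.span {tquot F i ^ (a + 1)} :=
    span_tquot_pow_antitone (by omega) (hx.mem_of_mul_eq_zero (by omega) h)
  refine ⟨(Ideal.add_mem_iff_right _ hx.1).mp (span_tquot_pow_antitone a.le_succ hxτ), ?_⟩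
  exact fun hτ => hx.2 ((Ideal.add_mem_iff_left _ hτ).mp hxτ)

end HasValuation

variable {τ : TruncatedPowerSeries F i} {w : ℕ}

theorem setOf_mul_add_eq_zero_of_le (hτ : τ ∈ Ideal.span {tquot F i ^ w})
    (hw : (i + 1) / 2 ≤ w) :
    {x | x * (x + τ) = 0} = (Ideal.span {tquot F i ^ ((i + 1) / 2)} : Set _) := by
  ext x
  refine ⟨fun hx => ?_, fun hx => mul_add_eq_zero_of_mem_span (by omega) (by omega) hx hτ⟩
  by_contra hxc
  obtain ⟨a, ha, hxa⟩ := exists_hasValuation_of_notMem hxc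
  have := (hxa.of_mul_add_eq_zero (by omega) hx).le_of_mem hτ
  omega

theorem setOf_mul_add_eq_zero_of_lt [CharP F 2] (hτ : HasValuation τ w) (hw : w < (i + 1) / 2) :
    {x | x * (x + τ) = 0} = (Ideal.span {tquot F i ^ (i - w)} : Set _) ∪
      {x | ∃ y ∈ Ideal.span {tquot F i ^ (i - w)}, x = τ + y} := by
  have hττ : τ + τ = 0 := add_self_eq_zero_of_charTwo_algebra (F := F) τ
  ext x
  constructor
  · intro hx
    by_cases hxA : x ∈ Ideal.span {tquot F i ^ (i - w)}
    · exact Or.inl hxA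
    refine Or.inr ⟨x + τ, ?_, by rw [add_left_comm, hττ, add_zero]⟩
    obtain ⟨a, ha, hxa⟩ := exists_hasValuation_of_notMem hxA
    have hxτ := hxa.mem_of_mul_eq_zero (by omega) hx
    rcases lt_or_ge (2 * a) i with h2a | h2a
    · have hτa := hxa.of_mul_add_eq_zero h2a hx
      obtain rfl : a = w := le_antisymm (hτ.le_of_mem hτa.1) (hτa.le_of_mem hτ.1)
      exact hxτ
    · exfalso
      have hxw := span_tquot_pow_antitone (show w + 1 ≤ a by omega) hxa.1
      exact hτ.2 ((Ideal.add_mem_iff_right _ hxw).mp (span_tquot_pow_antitone (by omega) hxτ))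
  · rintro (hx | ⟨y, hy, rfl⟩)
    · exact mul_add_eq_zero_of_mem_span (by omega) (by omega) hx hτ.1
    · rw [Set.mem_ofPred_eq, add_comm τ y, add_assoc, hττ, add_zero, mul_comm]
      exact mul_add_eq_zero_of_mem_span (by omega) (by omega) hy hτ.1

end TruncatedPowerSeries

open TruncatedPowerSeries

theorem U_tau_description_general (F : Type*) [Field F] [Fintype F] [CharP F 2]
    (i w : ℕ)
    (τ : TruncatedPowerSeries F i)
    (hmem : τ ∈ Ideal.span {tquot F i ^ w})
    (hval : w < i → τ ∉ Ideal.span {tquot F i ^ (w + 1)}) :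
    (w < (i + 1) / 2 →
      ({x : TruncatedPowerSeries F i | x * (x + τ) = 0} =
          (Ideal.span {tquot F i ^ (i - w)} : Set (TruncatedPowerSeries F i)) ∪
            {x | ∃ y ∈ Ideal.span {tquot F i ^ (i - w)}, x = τ + y}) ∧
        Nat.card {x : TruncatedPowerSeries F i // x * (x + τ) = 0} =
          2 * Fintype.card F ^ w) ∧
    ((i + 1) / 2 ≤ w →
      ({x : TruncatedPowerSeries F i | x * (x + τ) = 0} =
          (Ideal.span {tquot F i ^ ((i + 1) / 2)} : Set (TruncatedPowerSeries F i))) ∧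
        Nat.card {x : TruncatedPowerSeries F i // x * (x + τ) = 0} =
          Fintype.card F ^ (i / 2)) := by
  refine ⟨fun hw => ?_, fun hw => ?_⟩
  · have hU := setOf_mul_add_eq_zero_of_lt ⟨hmem, hval (by omega)⟩ hw
    have hτA : τ ∉ Ideal.span {tquot F i ^ (i - w)} :=
      fun h => hval (by omega) (span_tquot_pow_antitone (by omega) h)
    refine ⟨hU, ?_⟩
    change Nat.card ↥{x : TruncatedPowerSeries F i | x * (x + τ) = 0} = _
    rw [hU, AddSubgroupClass.card_union_setOf_add_eq_two_mul hτA,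
      card_span_tquot_pow (Nat.sub_le i w), Nat.sub_sub_self (by omega)]
  · have hU := setOf_mul_add_eq_zero_of_le hmem hw
    refine ⟨hU, ?_⟩
    change Nat.card ↥{x : TruncatedPowerSeries F i | x * (x + τ) = 0} = _
    rw [hU, SetLike.coe_sort_coe, card_span_tquot_pow (by omega)]
    congr 1
    omega

/-- Let `O = F_q[[t]]` with `q` a power of `2`, `O_i = O/(t^i)`, and `τ ∈ O_i` of valuation
`w ≥ 1` (with `w = i` when `τ = 0`).  The group `U(τ) = {x ∈ O_i : x(x+τ) = 0}` equals
`t^{i−w}O_i ∪ (τ + t^{i−w}O_i)` if `w < ⌈i/2⌉`, and `t^{⌈i/2⌉}O_i` if `w ≥ ⌈i/2⌉`;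
in particular `|U(τ)| = 2q^w` in the first case and `|U(τ)| = q^{⌊i/2⌋}` in the second. -/
theorem U_tau_description (F : Type*) [Field F] [Fintype F] [CharP F 2]
    (i w : ℕ) (hi : 1 ≤ i) (hw1 : 1 ≤ w) (hwi : w ≤ i)
    (τ : TruncatedPowerSeries F i)
    (hmem : τ ∈ Ideal.span {tquot F i ^ w})
    (hval : w < i → τ ∉ Ideal.span {tquot F i ^ (w + 1)})
    (hzero : τ = 0 → w = i) :
    (w < (i + 1) / 2 →
      ({x : TruncatedPowerSeries F i | x * (x + τ) = 0} =
          (Ideal.span {tquot F i ^ (i - w)} : Set (TruncatedPowerSeries F i)) ∪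
            {x | ∃ y ∈ Ideal.span {tquot F i ^ (i - w)}, x = τ + y}) ∧
        Nat.card {x : TruncatedPowerSeries F i // x * (x + τ) = 0} =
          2 * Fintype.card F ^ w) ∧
    ((i + 1) / 2 ≤ w →
      ({x : TruncatedPowerSeries F i | x * (x + τ) = 0} =
          (Ideal.span {tquot F i ^ ((i + 1) / 2)} : Set (TruncatedPowerSeries F i))) ∧
        Nat.card {x : TruncatedPowerSeries F i // x * (x + τ) = 0} =
          Fintype.card F ^ (i / 2)) :=
  U_tau_description_general F i w τ hmem hval
end
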